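/- arXiv:2206.00980 — 6 statements merged into one kernel-verified Lean document; each statement's English description precedes it below -/
import Mathlib

section
/- Let G be a connected simple graph of order n such that n is a Laplacian eigenvalue of G with multiplicity exactly 2. Then 1 is not a Laplacian eigenvalue of G. -/
open SimpleGraph Polynomial

/-- The multiset of Laplacian eigenvalues (roots of the characteristic polynomial of the
Laplacian matrix over `ℝ`, with multiplicity) of a simple graph. -/
noncomputable def lapSpec {V : Type*} [Fintype V] [DecidableEq V] (G : SimpleGraph V) :
    Multiset ℝ :=
  letI := Classical.decRel G.Adj
  ((G.lapMatrix ℝ).charpoly).roots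

/-- The disjoint union of two simple graphs. -/
def graphUnion {α β : Type*} (G : SimpleGraph α) (H : SimpleGraph β) : SimpleGraph (α ⊕ β) :=
  SimpleGraph.fromRel fun x y =>
    (∃ a b, x = Sum.inl a ∧ y = Sum.inl b ∧ G.Adj a b) ∨
    (∃ a b, x = Sum.inr a ∧ y = Sum.inr b ∧ H.Adj a b)

/-- The join of two simple graphs: the disjoint union together with all edges between the parts. -/
def graphJoin {α β : Type*} (G : SimpleGraph α) (H : SimpleGraph β) : SimpleGraph (α ⊕ β) :=
  SimpleGraph.fromRel fun x y =>
    (∃ a b, x = Sum.inl a ∧ y = Sum.inl b ∧ G.Adj a b) ∨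
    (∃ a b, x = Sum.inr a ∧ y = Sum.inr b ∧ H.Adj a b) ∨
    (∃ a b, x = Sum.inl a ∧ y = Sum.inr b)

/-- `G` is a join of two nonempty graphs. -/
def IsJoin {γ : Type*} [Fintype γ] (G : SimpleGraph γ) : Prop :=
  ∃ (p q : ℕ) (F : SimpleGraph (Fin p)) (H : SimpleGraph (Fin q)),
    0 < p ∧ 0 < q ∧ Nonempty (G ≃g graphJoin F H)

/-- The multiset `S_{{i,j},n}^m`: the integers `0,1,…,n` with `i` and `j` removed and an extra
copy of `m` added (so `m` is counted twice), viewed as a multiset of reals. -/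
def Sdouble (i j n m : ℕ) : Multiset ℝ :=
  ((m ::ₘ (((Finset.range (n + 1)).val.erase i).erase j)).map (fun k : ℕ => (k : ℝ)))

/-- The multiset `S_{j,n} = {0,1,…,n} \ {j}`, viewed as a multiset of reals. -/
def Ssingle (j n : ℕ) : Multiset ℝ :=
  (((Finset.range (n + 1)).val.erase j).map (fun k : ℕ => (k : ℝ)))

/-- The one-vertex graph `K₁`. -/
def K1 : SimpleGraph (Fin 1) := ⊥

/-- The complete graph `K₂` on two vertices. -/
def K2 : SimpleGraph (Fin 2) := ⊤

section AuxProofs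

open Matrix Finset

lemma aux_charpoly_conj {V : Type*} [Fintype V] [DecidableEq V] (P A Q : Matrix V V ℝ)
    (h : P * Q = 1) : (P * A * Q).charpoly = A.charpoly := by
  have h1 : P.map (C : ℝ → ℝ[X]) * Q.map (C : ℝ → ℝ[X]) = 1 := by
    rw [← Matrix.map_mul, h, Matrix.map_one _ (map_zero C) (map_one C)]
  have hcomm : ∀ M : Matrix V V ℝ[X], Matrix.scalar V (X : ℝ[X]) * M = M * Matrix.scalar V X :=
    fun M => (Matrix.scalar_commute (X : ℝ[X]) (fun r => Commute.all _ r) M).eq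
  have hmap : charmatrix (P * A * Q) = P.map C * charmatrix A * Q.map C := by
    unfold charmatrix
    simp only [RingHom.mapMatrix_apply]
    rw [mul_sub, sub_mul]
    congr 1
    · rw [← hcomm (P.map C), mul_assoc, h1, mul_one]
    · rw [← Matrix.map_mul, ← Matrix.map_mul]
  have h2 : (P.map (C : ℝ → ℝ[X])).det * (Q.map (C : ℝ → ℝ[X])).det = 1 := by
    rw [← det_mul, h1, det_one]
  rw [Matrix.charpoly, Matrix.charpoly, hmap, det_mul, det_mul]
  calc (P.map C).det * (charmatrix A).det * (Q.map C).det
      = (P.map C).det * (Q.map C).det * (charmatrix A).det := by ring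
    _ = (charmatrix A).det := by rw [h2, one_mul]

lemma aux_charpoly_roots_hermitian {V : Type*} [Fintype V] [DecidableEq V]
    (A : Matrix V V ℝ) (hA : A.IsHermitian) :
    A.charpoly.roots = Finset.univ.val.map hA.eigenvalues := by
  have hU : (hA.eigenvectorUnitary : Matrix V V ℝ) * star (hA.eigenvectorUnitary : Matrix V V ℝ) = 1 :=
    Matrix.mem_unitaryGroup_iff.mp hA.eigenvectorUnitary.2
  have hD : A.charpoly = (Matrix.diagonal hA.eigenvalues).charpoly := by
    have hs := hA.spectral_theorem
    have hde : (RCLike.ofReal ∘ hA.eigenvalues : V → ℝ) = hA.eigenvalues := by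
      funext i; simp
    rw [hde] at hs
    conv_lhs => rw [hs]
    exact aux_charpoly_conj _ _ _ hU
  have hdiag : (Matrix.diagonal hA.eigenvalues).charpoly
      = ∏ i : V, (X - C (hA.eigenvalues i)) := by
    rw [Matrix.charpoly]
    have : charmatrix (Matrix.diagonal hA.eigenvalues)
        = Matrix.diagonal (fun i => (X : ℝ[X]) - C (hA.eigenvalues i)) := by
      ext i j
      by_cases hij : i = j
      · subst hij; simp
      · simp [charmatrix_apply_ne _ _ _ hij, Matrix.diagonal_apply_ne _ hij,
          Matrix.diagonal_apply_ne _ hij]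
    rw [this, det_diagonal]
  rw [hD, hdiag, ← Polynomial.roots_multiset_prod_X_sub_C (Finset.univ.val.map hA.eigenvalues)]
  congr 1
  rw [Multiset.map_map, Finset.prod_eq_multiset_prod]
  rfl

lemma aux_compl_lap_mulVec {V : Type*} [Fintype V] [DecidableEq V]
    (G : SimpleGraph V) [DecidableRel G.Adj] [DecidableRel Gᶜ.Adj]
    (x : V → ℝ) (μ : ℝ) (hsum : ∑ u, x u = 0) (hx : G.lapMatrix ℝ *ᵥ x = μ • x) :
    Gᶜ.lapMatrix ℝ *ᵥ x = ((Fintype.card V : ℝ) - μ) • x := by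
  ext v
  have hxv := congrFun hx v
  rw [lapMatrix_mulVec_apply] at hxv
  simp only [Pi.smul_apply, smul_eq_mul] at hxv
  have hNG : ∑ u ∈ G.neighborFinset v, x u = (G.degree v : ℝ) * x v - μ * x v := by
    linarith
  have hsub : {v} ⊆ (G.neighborFinset v)ᶜ := by
    simp [Finset.singleton_subset_iff]
  have hN : ∑ u ∈ Gᶜ.neighborFinset v, x u
      = - x v - ∑ u ∈ G.neighborFinset v, x u := by
    have hnc : Gᶜ.neighborFinset v = (G.neighborFinset v)ᶜ \ {v} := by
      ext u
      simp only [mem_neighborFinset, compl_adj, Finset.mem_sdiff, Finset.mem_compl,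
        Finset.mem_singleton]
      constructor
      · rintro ⟨h1, h2⟩; exact ⟨h2, fun h => h1 h.symm⟩
      · rintro ⟨h1, h2⟩; exact ⟨fun h => h2 h.symm, h1⟩
    rw [hnc, Finset.sum_sdiff_eq_sub hsub, Finset.sum_singleton]
    have : ∑ u ∈ (G.neighborFinset v)ᶜ, x u + ∑ u ∈ G.neighborFinset v, x u = ∑ u, x u :=
      Finset.sum_compl_add_sum _ _
    rw [hsum] at this
    linarith
  have hdeg : (Gᶜ.degree v : ℝ) = (Fintype.card V : ℝ) - 1 - G.degree v := by
    have h1 : G.degree v + 1 ≤ Fintype.card V := by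
      have := G.degree_lt_card_verts v
      omega
    rw [G.degree_compl]
    have h2 : 1 + G.degree v ≤ Fintype.card V := by omega
    push_cast [Nat.cast_sub h2, Nat.sub_sub]
    ring
  rw [lapMatrix_mulVec_apply, hN, hNG, hdeg]
  simp only [Pi.smul_apply, smul_eq_mul]
  ring

lemma aux_sum_lap_mulVec {V : Type*} [Fintype V] [DecidableEq V]
    (G : SimpleGraph V) [DecidableRel G.Adj] (y : V → ℝ) :
    ∑ i, (G.lapMatrix ℝ *ᵥ y) i = 0 := by
  have hsym := G.isSymm_lapMatrix (R := ℝ)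
  have hrow : ∀ j : V, ∑ i, G.lapMatrix ℝ i j = 0 := by
    intro j
    have := congrFun (G.lapMatrix_mulVec_const_eq_zero (R := ℝ)) j
    simp only [mulVec, dotProduct, mul_one, Pi.zero_apply] at this
    calc ∑ i, G.lapMatrix ℝ i j = ∑ i, G.lapMatrix ℝ j i :=
          Finset.sum_congr rfl fun i _ => by rw [← hsym.apply i j]
      _ = 0 := this
  simp only [mulVec, dotProduct]
  rw [Finset.sum_comm]
  calc ∑ j, ∑ i, G.lapMatrix ℝ i j * y j
      = ∑ j : V, (0:ℝ) * y j := by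
        refine Finset.sum_congr rfl fun j _ => ?_
        rw [← Finset.sum_mul, hrow j]
    _ = 0 := by simp

lemma aux_fiber_card {V : Type*} [Fintype V] [DecidableEq V]
    (H : SimpleGraph V) [Fintype H.ConnectedComponent] [DecidableEq H.ConnectedComponent]
    (h3 : 3 ≤ Fintype.card H.ConnectedComponent) (b : H.ConnectedComponent) :
    (Finset.univ.filter (fun j => H.connectedComponentMk j = b)).card + 2 ≤ Fintype.card V := by
  have hcard : 1 < (Finset.univ.erase b).card := by
    rw [Finset.card_erase_of_mem (Finset.mem_univ b), Finset.card_univ]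
    omega
  obtain ⟨b1, hb1, b2, hb2, hne⟩ := Finset.one_lt_card.mp hcard
  obtain ⟨v1, hv1⟩ := b1.exists_rep
  obtain ⟨v2, hv2⟩ := b2.exists_rep
  set s := Finset.univ.filter (fun j => H.connectedComponentMk j = b) with hs
  have hv1' : H.connectedComponentMk v1 = b1 := hv1
  have hv2' : H.connectedComponentMk v2 = b2 := hv2
  have hv1b : H.connectedComponentMk v1 ≠ b := by
    rw [hv1']; exact Finset.ne_of_mem_erase hb1
  have hv2b : H.connectedComponentMk v2 ≠ b := by
    rw [hv2']; exact Finset.ne_of_mem_erase hb2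
  have hv1s : v1 ∉ s := by simp [hs, hv1b]
  have hv2s : v2 ∉ s := by simp [hs, hv2b]
  have hv12 : v1 ≠ v2 := fun h => hne (by rw [← hv1', ← hv2', h])
  have : s.card + 2 = (insert v1 (insert v2 s)).card := by
    rw [Finset.card_insert_of_notMem (by simp [hv12, hv1s]),
      Finset.card_insert_of_notMem hv2s]
  rw [this, ← Finset.card_univ]
  exact Finset.card_le_card (Finset.subset_univ _)

end AuxProofs

open Matrix Finset

/-- If `n` is a Laplacian eigenvalue of the connected graph `G` of order `n` with multiplicity
exactly `2`, then `1` is not a Laplacian eigenvalue of `G`. -/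
theorem one_not_mem_lapSpec_of_double_card_eigenvalue {V : Type*} [Fintype V] [DecidableEq V]
    (G : SimpleGraph V) (hG : G.Connected)
    (h2 : (lapSpec G).count (Fintype.card V : ℝ) = 2) :
    (1 : ℝ) ∉ lapSpec G := by
  letI := Classical.decRel G.Adj
  classical
  intro hmem
  have hA : (G.lapMatrix ℝ).IsHermitian := (posSemidef_lapMatrix ℝ G).1
  have hspec : lapSpec G = Finset.univ.val.map hA.eigenvalues :=
    aux_charpoly_roots_hermitian (G.lapMatrix ℝ) hA
  rw [hspec] at hmem h2
  set n := Fintype.card V with hn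
  -- turn the count into a filter cardinality
  have hcount : (Finset.univ.filter (fun i => (n : ℝ) = hA.eigenvalues i)).card = 2 := by
    rw [Multiset.count_map] at h2
    simpa [Finset.card, Finset.filter_val] using h2
  have hn2 : 2 ≤ n := by
    have := Finset.card_filter_le Finset.univ (fun i => (n : ℝ) = hA.eigenvalues i)
    rw [hcount] at this
    simpa [hn] using this
  have hnR : (0:ℝ) < n := by exact_mod_cast (by omega : 0 < n)
  obtain ⟨j, hj, k, hk, hjk⟩ := Finset.one_lt_card.mp (by rw [hcount]; norm_num)
  have hj' : hA.eigenvalues j = (n : ℝ) := ((Finset.mem_filter.mp hj).2).symm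
  have hk' : hA.eigenvalues k = (n : ℝ) := ((Finset.mem_filter.mp hk).2).symm
  -- basic facts about eigenvectors
  have hdot : ∀ a b : V,
      (∑ i, hA.eigenvectorBasis a i * hA.eigenvectorBasis b i) = if a = b then (1:ℝ) else 0 := by
    intro a b
    have := orthonormal_iff_ite.mp hA.eigenvectorBasis.orthonormal a b
    simpa [PiLp.inner_apply, RCLike.inner_apply, conj_trivial, mul_comm] using this
  have hsum0 : ∀ a : V, hA.eigenvalues a ≠ 0 → ∑ i, hA.eigenvectorBasis a i = 0 := by
    intro a ha
    have h0 := aux_sum_lap_mulVec G ⇑(hA.eigenvectorBasis a)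
    rw [hA.mulVec_eigenvectorBasis] at h0
    simp only [Pi.smul_apply, smul_eq_mul, ← Finset.mul_sum] at h0
    exact (mul_eq_zero.mp h0).resolve_left ha
  have hker : ∀ a : V, hA.eigenvalues a = (n:ℝ) →
      Gᶜ.lapMatrix ℝ *ᵥ ⇑(hA.eigenvectorBasis a) = 0 := by
    intro a ha
    have h := aux_compl_lap_mulVec G ⇑(hA.eigenvectorBasis a) ((n:ℝ))
      (hsum0 a (by rw [ha]; exact ne_of_gt hnR))
      (by rw [hA.mulVec_eigenvectorBasis, ha])
    rw [h, sub_self, zero_smul]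
  -- three independent vectors in the kernel of the complement Laplacian
  set v : V → ℝ := ⇑(hA.eigenvectorBasis j) with hv
  set w : V → ℝ := ⇑(hA.eigenvectorBasis k) with hw
  have hvsum : ∑ i, v i = 0 := hsum0 j (by rw [hj']; exact ne_of_gt hnR)
  have hwsum : ∑ i, w i = 0 := hsum0 k (by rw [hk']; exact ne_of_gt hnR)
  have hvv : ∑ i, v i * v i = 1 := by simpa using hdot j j
  have hww : ∑ i, w i * w i = 1 := by simpa using hdot k k
  have hwv : ∑ i, w i * v i = 0 := by simpa [hjk.symm] using hdot k j
  have hvw : ∑ i, v i * w i = 0 := by simpa [hjk] using hdot j k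
  have hne : Nonempty V := Fintype.card_pos_iff.mp (by omega)
  obtain ⟨i₀⟩ := hne
  have hind : LinearIndependent ℝ ![(fun _ => (1:ℝ)), v, w] := by
    rw [Fintype.linearIndependent_iff]
    intro g hg
    have hg' : ∀ i : V, g 0 + g 1 * v i + g 2 * w i = 0 := by
      intro i
      have := congrFun hg i
      simpa [Fin.sum_univ_three, Matrix.cons_val_zero, Matrix.cons_val_one] using this
    have key : ∀ y : V → ℝ, (∑ i, (g 0 + g 1 * v i + g 2 * w i) * y i) = 0 := by
      intro y
      exact Finset.sum_eq_zero fun i _ => by rw [hg' i, zero_mul]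
    have hexp : ∀ y : V → ℝ, ∑ i, (g 0 + g 1 * v i + g 2 * w i) * y i
        = g 0 * (∑ i, y i) + g 1 * (∑ i, v i * y i) + g 2 * (∑ i, w i * y i) := by
      intro y
      rw [Finset.mul_sum, Finset.mul_sum, Finset.mul_sum, ← Finset.sum_add_distrib,
        ← Finset.sum_add_distrib]
      exact Finset.sum_congr rfl fun i _ => by ring
    have e1 : g 1 = 0 := by
      have := key v; rw [hexp v, hvsum, hvv, hwv] at this; linarith
    have e2 : g 2 = 0 := by
      have := key w; rw [hexp w, hwsum, hvw, hww] at this; linarith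
    have e0 : g 0 = 0 := by
      have := hg' i₀; rw [e1, e2] at this; linarith
    intro t
    fin_cases t <;> assumption
  set K := LinearMap.ker (Matrix.toLin' (Gᶜ.lapMatrix ℝ)) with hK
  have hmem1 : (fun _ => (1:ℝ)) ∈ K := by
    rw [LinearMap.mem_ker, Matrix.toLin'_apply]
    exact Gᶜ.lapMatrix_mulVec_const_eq_zero
  have hmemv : v ∈ K := by
    rw [LinearMap.mem_ker, Matrix.toLin'_apply]; exact hker j hj'
  have hmemw : w ∈ K := by
    rw [LinearMap.mem_ker, Matrix.toLin'_apply]; exact hker k hk'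
  have hmemall : ∀ t : Fin 3, ![(fun _ => (1:ℝ)), v, w] t ∈ K := by
    intro t; fin_cases t <;> assumption
  have hindK : LinearIndependent ℝ (fun t : Fin 3 => (⟨![(fun _ => (1:ℝ)), v, w] t, hmemall t⟩ : K)) := by
    apply LinearIndependent.of_comp K.subtype
    exact hind
  have h3le : 3 ≤ Module.finrank ℝ K := by
    simpa using hindK.fintype_card_le_finrank
  have hcc3 : 3 ≤ Fintype.card Gᶜ.ConnectedComponent := by
    rw [Gᶜ.card_connectedComponent_eq_finrank_ker_toLin'_lapMatrix]
    exact h3le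
  -- the eigenvector for eigenvalue 1
  obtain ⟨i1, -, hi1⟩ := Multiset.mem_map.mp hmem
  set x : V → ℝ := ⇑(hA.eigenvectorBasis i1) with hx
  have hxx : ∑ i, x i * x i = 1 := by simpa using hdot i1 i1
  have hx2 : ∑ i, (x i)^2 = 1 := by
    rw [← hxx]; exact Finset.sum_congr rfl fun i _ => (sq (x i)) ▸ by ring
  have hxsum : ∑ i, x i = 0 := hsum0 i1 (by rw [hi1]; norm_num)
  have hx1 : G.lapMatrix ℝ *ᵥ x = (1:ℝ) • x := by rw [hA.mulVec_eigenvectorBasis, hi1]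
  have hcompl : Gᶜ.lapMatrix ℝ *ᵥ x = ((n:ℝ) - 1) • x := aux_compl_lap_mulVec G x 1 hxsum hx1
  have hquad : (∑ i, ∑ jj, if Gᶜ.Adj i jj then (x i - x jj)^2 else 0) = 2 * ((n:ℝ) - 1) := by
    have h := Gᶜ.lapMatrix_toLinearMap₂' ℝ x
    rw [Matrix.toLinearMap₂'_apply', hcompl] at h
    have hdp : x ⬝ᵥ (((n:ℝ) - 1) • x) = ((n:ℝ) - 1) := by
      rw [dotProduct_smul, smul_eq_mul]
      have : x ⬝ᵥ x = 1 := hxx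
      rw [this, mul_one]
    rw [hdp] at h
    linarith [h]
  -- component decomposition
  set cc : V → Gᶜ.ConnectedComponent := Gᶜ.connectedComponentMk with hccdef
  set fib : Gᶜ.ConnectedComponent → Finset V :=
    fun b => Finset.univ.filter (fun i => cc i = b) with hfib
  set S : Gᶜ.ConnectedComponent → ℝ := fun b => ∑ i ∈ fib b, x i with hS
  set T : Gᶜ.ConnectedComponent → ℝ := fun b => ∑ i ∈ fib b, (x i)^2 with hT
  have hfibcard : ∀ b, ((fib b).card : ℝ) ≤ (n:ℝ) - 2 := by
    intro b
    have h := aux_fiber_card Gᶜ hcc3 b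
    have h' : ((fib b).card + 2 : ℕ) ≤ n := h
    have h'' : (((fib b).card + 2 : ℕ) : ℝ) ≤ (n : ℝ) := Nat.cast_le.mpr h'
    push_cast at h''
    linarith
  have hstep1 : ∀ i, (∑ jj, if Gᶜ.Adj i jj then (x i - x jj)^2 else 0)
      ≤ ∑ jj ∈ fib (cc i), (x i - x jj)^2 := by
    intro i
    rw [← Finset.sum_filter]
    apply Finset.sum_le_sum_of_subset_of_nonneg
    · intro jj hjj
      simp only [hfib, Finset.mem_filter, Finset.mem_univ, true_and] at hjj ⊢
      exact (ConnectedComponent.sound hjj.symm.reachable : cc jj = cc i)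
    · intro jj _ _
      positivity
  have hstep2 : ∀ i, ∑ jj ∈ fib (cc i), (x i - x jj)^2
      = ((fib (cc i)).card : ℝ) * (x i)^2 - 2 * x i * S (cc i) + T (cc i) := by
    intro i
    calc ∑ jj ∈ fib (cc i), (x i - x jj)^2
        = ∑ jj ∈ fib (cc i), ((x i)^2 - 2 * x i * x jj + (x jj)^2) :=
          Finset.sum_congr rfl fun jj _ => by ring
      _ = ((fib (cc i)).card : ℝ) * (x i)^2 - 2 * x i * S (cc i) + T (cc i) := by
          rw [Finset.sum_add_distrib, Finset.sum_sub_distrib, Finset.sum_const,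
            ← Finset.mul_sum, nsmul_eq_mul]
  have hfibS : ∑ i, x i * S (cc i) = ∑ b, S b * S b := by
    rw [← Finset.sum_fiberwise Finset.univ cc (fun i => x i * S (cc i))]
    refine Finset.sum_congr rfl fun b _ => ?_
    calc ∑ i ∈ Finset.univ.filter (fun i => cc i = b), x i * S (cc i)
        = ∑ i ∈ Finset.univ.filter (fun i => cc i = b), x i * S b :=
          Finset.sum_congr rfl fun i hi => by rw [(Finset.mem_filter.mp hi).2]
      _ = S b * S b := by rw [← Finset.sum_mul]
  have hTsum : ∑ b, T b = 1 := by
    rw [hT]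
    have := Finset.sum_fiberwise Finset.univ cc (fun i => (x i)^2)
    rw [← hx2]
    exact this
  have hTi : ∑ i, T (cc i) = ∑ b, ((fib b).card : ℝ) * T b := by
    rw [← Finset.sum_fiberwise Finset.univ cc (fun i => T (cc i))]
    refine Finset.sum_congr rfl fun b _ => ?_
    calc ∑ i ∈ Finset.univ.filter (fun i => cc i = b), T (cc i)
        = ∑ i ∈ Finset.univ.filter (fun i => cc i = b), T b :=
          Finset.sum_congr rfl fun i hi => by rw [(Finset.mem_filter.mp hi).2]
      _ = ((fib b).card : ℝ) * T b := by rw [Finset.sum_const, nsmul_eq_mul]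
  have hTnn : ∀ b, 0 ≤ T b := fun b => Finset.sum_nonneg fun _ _ => sq_nonneg _
  have hSnn : 0 ≤ ∑ b, S b * S b := Finset.sum_nonneg fun b _ => mul_self_nonneg _
  have hsum1 : ∑ i, ∑ jj, (if Gᶜ.Adj i jj then (x i - x jj)^2 else 0)
      ≤ ∑ i, (((fib (cc i)).card : ℝ) * (x i)^2 - 2 * x i * S (cc i) + T (cc i)) :=
    Finset.sum_le_sum fun i _ => by rw [← hstep2 i]; exact hstep1 i
  have hsum2 : ∑ i, (((fib (cc i)).card : ℝ) * (x i)^2 - 2 * x i * S (cc i) + T (cc i))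
      = (∑ i, ((fib (cc i)).card : ℝ) * (x i)^2) - 2 * (∑ i, x i * S (cc i))
        + ∑ i, T (cc i) := by
    rw [Finset.sum_add_distrib, Finset.sum_sub_distrib, Finset.mul_sum]
    simp only [mul_assoc]
  have hsum3 : ∑ i, ((fib (cc i)).card : ℝ) * (x i)^2 ≤ (n:ℝ) - 2 := by
    calc ∑ i, ((fib (cc i)).card : ℝ) * (x i)^2
        ≤ ∑ i, ((n:ℝ) - 2) * (x i)^2 :=
          Finset.sum_le_sum fun i _ => mul_le_mul_of_nonneg_right (hfibcard _) (sq_nonneg _)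
      _ = (n:ℝ) - 2 := by rw [← Finset.mul_sum, hx2, mul_one]
  have hsum4 : ∑ b, ((fib b).card : ℝ) * T b ≤ (n:ℝ) - 2 := by
    calc ∑ b, ((fib b).card : ℝ) * T b
        ≤ ∑ b, ((n:ℝ) - 2) * T b :=
          Finset.sum_le_sum fun b _ => mul_le_mul_of_nonneg_right (hfibcard _) (hTnn _)
      _ = (n:ℝ) - 2 := by rw [← Finset.mul_sum, hTsum, mul_one]
  rw [hsum2, hfibS, hTi] at hsum1
  rw [hquad] at hsum1
  linarith
end

section
/- Let G be a simple graph that is the join of two nonempty graphs. Then 1 is a Laplacian eigenvalue of G if and only if G = F ∨ K₁ where F is a disconnected graph of order at least 2 (K₁ being the one-vertex graph). -/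
open SimpleGraph Polynomial

open Matrix Finset

section AdjLemmas
variable {α β : Type*} (A : SimpleGraph α) (B : SimpleGraph β) (a a' : α) (b b' : β)

@[simp] lemma graphUnion_adj_inl_inl : (graphUnion A B).Adj (.inl a) (.inl a') ↔ A.Adj a a' := by
  constructor
  · rintro ⟨hne, ((⟨x,y,hx,hy,h⟩|⟨x,y,hx,hy,h⟩)|(⟨x,y,hx,hy,h⟩|⟨x,y,hx,hy,h⟩))⟩ <;>
      simp_all [SimpleGraph.adj_comm]
  · intro h
    exact ⟨by simp [h.ne], Or.inl (Or.inl ⟨a, a', rfl, rfl, h⟩)⟩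

@[simp] lemma graphUnion_adj_inl_inr : ¬ (graphUnion A B).Adj (.inl a) (.inr b) := by
  rintro ⟨hne, (⟨x,y,hx,hy,h⟩|⟨x,y,hx,hy,h⟩) | (⟨x,y,hx,hy,h⟩|⟨x,y,hx,hy,h⟩)⟩ <;> simp_all

@[simp] lemma graphUnion_adj_inr_inl : ¬ (graphUnion A B).Adj (.inr b) (.inl a) := by
  rintro ⟨hne, (⟨x,y,hx,hy,h⟩|⟨x,y,hx,hy,h⟩) | (⟨x,y,hx,hy,h⟩|⟨x,y,hx,hy,h⟩)⟩ <;> simp_all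

@[simp] lemma graphUnion_adj_inr_inr : (graphUnion A B).Adj (.inr b) (.inr b') ↔ B.Adj b b' := by
  constructor
  · rintro ⟨hne, ((⟨x,y,hx,hy,h⟩|⟨x,y,hx,hy,h⟩)|(⟨x,y,hx,hy,h⟩|⟨x,y,hx,hy,h⟩))⟩ <;>
      simp_all [SimpleGraph.adj_comm]
  · intro h
    exact ⟨by simp [h.ne], Or.inl (Or.inr ⟨b, b', rfl, rfl, h⟩)⟩

@[simp] lemma graphJoin_adj_inl_inl : (graphJoin A B).Adj (.inl a) (.inl a') ↔ A.Adj a a' := by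
  constructor
  · rintro ⟨hne, ((⟨x,y,hx,hy,h⟩|⟨x,y,hx,hy,h⟩|⟨x,y,hx,hy⟩)|(⟨x,y,hx,hy,h⟩|⟨x,y,hx,hy,h⟩|⟨x,y,hx,hy⟩))⟩ <;>
      simp_all [SimpleGraph.adj_comm]
  · intro h
    exact ⟨by simp [h.ne], Or.inl (Or.inl ⟨a, a', rfl, rfl, h⟩)⟩

@[simp] lemma graphJoin_adj_inl_inr : (graphJoin A B).Adj (.inl a) (.inr b) :=
  ⟨by simp, Or.inl (Or.inr (Or.inr ⟨a, b, rfl, rfl⟩))⟩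

@[simp] lemma graphJoin_adj_inr_inl : (graphJoin A B).Adj (.inr b) (.inl a) :=
  ⟨by simp, Or.inr (Or.inr (Or.inr ⟨a, b, rfl, rfl⟩))⟩

@[simp] lemma graphJoin_adj_inr_inr : (graphJoin A B).Adj (.inr b) (.inr b') ↔ B.Adj b b' := by
  constructor
  · rintro ⟨hne, ((⟨x,y,hx,hy,h⟩|⟨x,y,hx,hy,h⟩|⟨x,y,hx,hy⟩)|(⟨x,y,hx,hy,h⟩|⟨x,y,hx,hy,h⟩|⟨x,y,hx,hy⟩))⟩ <;>
      simp_all [SimpleGraph.adj_comm]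
  · intro h
    exact ⟨by simp [h.ne], Or.inl (Or.inr (Or.inl ⟨b, b', rfl, rfl, h⟩))⟩

lemma compl_graphJoin : (graphJoin A B)ᶜ = graphUnion Aᶜ Bᶜ := by
  ext x y
  cases x <;> cases y <;> simp [SimpleGraph.compl_adj]

/-- swapping the two sides of a join -/
def joinComm : graphJoin A B ≃g graphJoin B A :=
  ⟨Equiv.sumComm α β, by rintro (a|b) (a'|b') <;> simp [Equiv.sumComm]⟩

end AdjLemmas

lemma graph_fin_one_eq_K1 (H : SimpleGraph (Fin 1)) : H = K1 := by
  ext a b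
  simp only [K1, SimpleGraph.bot_adj, iff_false]
  intro h
  exact h.ne (Subsingleton.elim a b)

section MatrixLemmas
variable {n : Type*} [Fintype n] [DecidableEq n]

lemma charpoly_eval' (M : Matrix n n ℝ) (r : ℝ) :
    M.charpoly.eval r = (r • (1 : Matrix n n ℝ) - M).det := by
  rw [Matrix.charpoly, eval_det, Matrix.matPolyEquiv_charmatrix]
  rw [eval_sub, eval_X, eval_C]
  congr 1
  ext i j
  simp [Matrix.scalar, Matrix.smul_apply, Matrix.one_apply, Matrix.diagonal_apply,
    Pi.algebraMap_apply]

lemma one_mem_roots_charpoly_iff (M : Matrix n n ℝ) :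
    (1:ℝ) ∈ M.charpoly.roots ↔ ∃ v : n → ℝ, v ≠ 0 ∧ M *ᵥ v = v := by
  rw [Polynomial.mem_roots (M.charpoly_monic.ne_zero), Polynomial.IsRoot.def, charpoly_eval',
    one_smul, ← Matrix.exists_mulVec_eq_zero_iff]
  constructor
  · rintro ⟨v, hv, h⟩
    refine ⟨v, hv, ?_⟩
    rwa [Matrix.sub_mulVec, Matrix.one_mulVec, sub_eq_zero, eq_comm] at h
  · rintro ⟨v, hv, h⟩
    refine ⟨v, hv, ?_⟩
    rw [Matrix.sub_mulVec, Matrix.one_mulVec, sub_eq_zero, h]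

lemma smul_one_sub_ones_mulVec (c : ℝ) (w : n → ℝ) :
    ((c • (1 : Matrix n n ℝ)) - Matrix.of (fun _ _ => 1)) *ᵥ w
      = c • w - (∑ k, w k) • (fun _ => (1:ℝ)) := by
  funext i
  rw [Matrix.sub_mulVec]
  have h1 : ((c • (1 : Matrix n n ℝ)) *ᵥ w) = c • w := by
    rw [Matrix.smul_mulVec, Matrix.one_mulVec]
  have h2 : ((Matrix.of (fun _ _ => (1:ℝ))) *ᵥ w) i = ∑ k, w k := by
    simp [Matrix.mulVec, dotProduct]
  simp only [Pi.sub_apply, h1, h2, Pi.smul_apply, smul_eq_mul, mul_one]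

end MatrixLemmas

section LapLemmas
variable {V : Type*} [Fintype V] [DecidableEq V]

lemma lapMatrix_congr {G G' : SimpleGraph V} (h : G = G')
    {i1 : DecidableRel G.Adj} {i2 : DecidableRel G'.Adj} :
    G.lapMatrix ℝ = G'.lapMatrix ℝ := by
  subst h
  have : i1 = i2 := Subsingleton.elim _ _
  subst this
  rfl

lemma lapMatrix_iso {W : Type*} [Fintype W] [DecidableEq W]
    {G : SimpleGraph V} {G' : SimpleGraph W} (e : G ≃g G')
    [DecidableRel G.Adj] [DecidableRel G'.Adj] :
    G.lapMatrix ℝ = (G'.lapMatrix ℝ).submatrix e e := by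
  have hdeg : ∀ v : V, G'.degree (e v) = G.degree v := by
    intro v
    rw [← SimpleGraph.card_neighborSet_eq_degree, ← SimpleGraph.card_neighborSet_eq_degree]
    exact (Fintype.card_congr (e.mapNeighborSet v)).symm
  ext i j
  by_cases h : i = j
  · subst h
    simp [SimpleGraph.lapMatrix, SimpleGraph.degMatrix, Matrix.diagonal_apply, hdeg]
  · have h' : e i ≠ e j := fun hc => h (e.toEquiv.injective hc)
    simp [SimpleGraph.lapMatrix, SimpleGraph.degMatrix, Matrix.diagonal_apply, h, h',
      e.map_adj_iff]

lemma charpoly_eq_of_iso {W : Type*} [Fintype W] [DecidableEq W]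
    {G : SimpleGraph V} {G' : SimpleGraph W} (e : G ≃g G')
    [DecidableRel G.Adj] [DecidableRel G'.Adj] :
    (G.lapMatrix ℝ).charpoly = (G'.lapMatrix ℝ).charpoly := by
  rw [lapMatrix_iso e]
  have : (G'.lapMatrix ℝ).submatrix e e =
      Matrix.reindex e.toEquiv.symm e.toEquiv.symm (G'.lapMatrix ℝ) := by
    rw [Matrix.reindex_apply]; rfl
  rw [this, Matrix.charpoly_reindex]

lemma sum_lapMatrix_mulVec (G : SimpleGraph V) [DecidableRel G.Adj] (v : V → ℝ) :
    ∑ i, (G.lapMatrix ℝ *ᵥ v) i = 0 := by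
  simp only [Matrix.mulVec, dotProduct]
  rw [Finset.sum_comm]
  refine Finset.sum_eq_zero fun j _ => ?_
  rw [← Finset.sum_mul]
  have hcol : ∑ i, G.lapMatrix ℝ i j = 0 := by
    have h := congrFun (G.lapMatrix_mulVec_const_eq_zero (R := ℝ)) j
    simp only [Matrix.mulVec, dotProduct, mul_one, Pi.zero_apply] at h
    rw [← h]
    refine Finset.sum_congr rfl fun i _ => ?_
    exact congrFun (congrFun (G.isSymm_lapMatrix (R := ℝ)) j) i |>.symm ▸ rfl
  rw [hcol, zero_mul]

lemma lapMatrix_add_compl (G : SimpleGraph V)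
    [DecidableRel G.Adj] [DecidableRel Gᶜ.Adj] :
    G.lapMatrix ℝ + Gᶜ.lapMatrix ℝ =
      (Fintype.card V : ℝ) • (1 : Matrix V V ℝ) - Matrix.of (fun _ _ => 1) := by
  ext i j
  simp only [Matrix.add_apply, SimpleGraph.lapMatrix, Matrix.sub_apply, SimpleGraph.degMatrix,
    Matrix.diagonal_apply, SimpleGraph.adjMatrix_apply, Matrix.smul_apply, Matrix.one_apply,
    Matrix.of_apply, SimpleGraph.compl_adj, smul_eq_mul, mul_ite, mul_one, mul_zero]
  by_cases h : i = j
  · subst h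
    rw [if_pos rfl, if_pos rfl, if_pos rfl, if_neg (G.irrefl),
      if_neg (fun hc : i ≠ i ∧ ¬G.Adj i i => hc.1 rfl)]
    simp only [sub_zero]
    rw [SimpleGraph.degree_eq_sum_if_adj, SimpleGraph.degree_eq_sum_if_adj,
      ← Finset.sum_add_distrib]
    have key : ∀ k : V, ((if G.Adj i k then (1:ℝ) else 0) + (if Gᶜ.Adj i k then 1 else 0))
        = 1 - (if k = i then 1 else 0) := by
      intro k
      by_cases hk : k = i
      · subst hk; simp [G.irrefl]
      · have : i ≠ k := fun hc => hk hc.symm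
        by_cases ha : G.Adj i k <;> simp [SimpleGraph.compl_adj, ha, this, hk]
    calc ∑ k, ((if G.Adj i k then (1:ℝ) else 0) + (if Gᶜ.Adj i k then 1 else 0))
        = ∑ k : V, (1 - (if k = i then (1:ℝ) else 0)) := Finset.sum_congr rfl fun k _ => key k
      _ = (Fintype.card V : ℝ) - 1 := by
          rw [Finset.sum_sub_distrib, Finset.sum_const, Finset.sum_ite_eq' Finset.univ i
            (fun _ => (1:ℝ))]
          simp [Finset.card_univ]
  · by_cases ha : G.Adj i j <;>
      simp [h, ha, SimpleGraph.compl_adj]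

lemma lapMatrix_graphUnion {α β : Type*} [Fintype α] [DecidableEq α] [Fintype β] [DecidableEq β]
    (A : SimpleGraph α) (B : SimpleGraph β)
    [DecidableRel A.Adj] [DecidableRel B.Adj] [DecidableRel (graphUnion A B).Adj] :
    (graphUnion A B).lapMatrix ℝ =
      Matrix.fromBlocks (A.lapMatrix ℝ) 0 0 (B.lapMatrix ℝ) := by
  have hdl : ∀ a : α, (((graphUnion A B).degree (Sum.inl a) : ℝ)) = (A.degree a : ℝ) := by
    intro a
    rw [SimpleGraph.degree_eq_sum_if_adj, SimpleGraph.degree_eq_sum_if_adj,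
      Fintype.sum_sum_type]
    simp
  have hdr : ∀ b : β, (((graphUnion A B).degree (Sum.inr b) : ℝ)) = (B.degree b : ℝ) := by
    intro b
    rw [SimpleGraph.degree_eq_sum_if_adj, SimpleGraph.degree_eq_sum_if_adj,
      Fintype.sum_sum_type]
    simp
  ext i j
  rcases i with a | b <;> rcases j with a' | b'
  · by_cases h : a = a'
    · subst h
      simp [SimpleGraph.lapMatrix, SimpleGraph.degMatrix, Matrix.diagonal_apply, hdl]
    · simp [SimpleGraph.lapMatrix, SimpleGraph.degMatrix, Matrix.diagonal_apply, h]
  · simp [SimpleGraph.lapMatrix, SimpleGraph.degMatrix, Matrix.diagonal_apply]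
  · simp [SimpleGraph.lapMatrix, SimpleGraph.degMatrix, Matrix.diagonal_apply]
  · by_cases h : b = b'
    · subst h
      simp [SimpleGraph.lapMatrix, SimpleGraph.degMatrix, Matrix.diagonal_apply, hdr]
    · simp [SimpleGraph.lapMatrix, SimpleGraph.degMatrix, Matrix.diagonal_apply, h]

end LapLemmas

lemma side_core {p q : ℕ} (hq : 0 < q) (F : SimpleGraph (Fin p)) [DecidableRel F.Adj]
    [DecidableRel Fᶜ.Adj] (x : Fin p → ℝ) (hx : x ≠ 0)
    (heig : Fᶜ.lapMatrix ℝ *ᵥ x = (((p : ℝ) + (q : ℝ)) - 1) • x) :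
    q = 1 ∧ 2 ≤ p ∧ ¬ F.Connected := by
  set s : ℝ := ∑ k, x k with hs
  have hLF : F.lapMatrix ℝ *ᵥ x = ((1 : ℝ) - q) • x - s • (fun _ => (1:ℝ)) := by
    have h1 : (F.lapMatrix ℝ + Fᶜ.lapMatrix ℝ) *ᵥ x
        = (p : ℝ) • x - s • (fun _ => (1:ℝ)) := by
      rw [lapMatrix_add_compl F, smul_one_sub_ones_mulVec]
      simp [hs]
    rw [Matrix.add_mulVec, heig] at h1
    funext i
    have h2 := congrFun h1 i
    simp only [Pi.add_apply, Pi.sub_apply, Pi.smul_apply, smul_eq_mul, mul_one] at h2 ⊢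
    linarith
  have hquad : 0 ≤ x ⬝ᵥ (F.lapMatrix ℝ *ᵥ x) := by
    have h := (SimpleGraph.posSemidef_lapMatrix ℝ F).dotProduct_mulVec_nonneg x
    simpa using h
  have hd : 0 < x ⬝ᵥ x := by
    have hnn : 0 ≤ x ⬝ᵥ x := Finset.sum_nonneg fun i _ => mul_self_nonneg (x i)
    rcases lt_or_eq_of_le hnn with h | h
    · exact h
    · exact absurd ((dotProduct_self_eq_zero).1 h.symm) hx
  have hval : x ⬝ᵥ (F.lapMatrix ℝ *ᵥ x) = (1 - (q:ℝ)) * (x ⬝ᵥ x) - s * s := by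
    rw [hLF, dotProduct_sub, dotProduct_smul, dotProduct_smul]
    simp only [smul_eq_mul, dotProduct, mul_one, ← hs]
  rw [hval] at hquad
  have hq1 : (1:ℝ) ≤ (q:ℝ) := by exact_mod_cast hq
  have hss : s = 0 := by nlinarith [mul_self_nonneg s]
  have hqR : (q:ℝ) = 1 := by nlinarith [mul_self_nonneg s]
  have hq1' : q = 1 := by exact_mod_cast hqR
  have hker : F.lapMatrix ℝ *ᵥ x = 0 := by
    rw [hLF, hqR, hss]
    funext i; simp
  have hreach : ∀ i j : Fin p, F.Reachable i j → x i = x j :=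
    (F.lapMatrix_mulVec_eq_zero_iff_forall_reachable (x := x)).1
      hker
  obtain ⟨i0, hi0⟩ : ∃ i, x i ≠ 0 := by
    by_contra hall
    push_neg at hall
    exact hx (funext fun i => hall i)
  have hp2 : 2 ≤ p := by
    by_contra hlt
    push_neg at hlt
    have hp01 : p = 0 ∨ p = 1 := by omega
    rcases hp01 with rfl | rfl
    · exact i0.elim0
    · have h1 : s = x i0 := by
        rw [hs, Fin.sum_univ_one]
        exact congrArg x (Subsingleton.elim 0 i0)
      exact hi0 (by rw [← h1, hss])
  refine ⟨hq1', hp2, fun hc => ?_⟩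
  have hconst : ∀ j, x j = x i0 := fun j => hreach j i0 (hc.preconnected j i0)
  have : s = (p : ℝ) * x i0 := by
    rw [hs, Finset.sum_congr rfl fun j _ => hconst j, Finset.sum_const, Finset.card_univ]
    simp [mul_comm]
  rw [hss] at this
  have hp0 : (p:ℝ) ≠ 0 := by
    have h2 : (0:ℝ) < p := by exact_mod_cast Nat.lt_of_lt_of_le Nat.zero_lt_two hp2
    linarith
  rcases mul_eq_zero.1 this.symm with h | h
  · exact hp0 h
  · exact hi0 h

lemma forward_core {p q : ℕ} (hp : 0 < p) (hq : 0 < q)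
    (F : SimpleGraph (Fin p)) (H : SimpleGraph (Fin q))
    [DecidableRel F.Adj] [DecidableRel H.Adj] [DecidableRel Fᶜ.Adj] [DecidableRel Hᶜ.Adj]
    [DecidableRel (graphJoin F H).Adj] [DecidableRel (graphJoin F H)ᶜ.Adj]
    [DecidableRel (graphUnion Fᶜ Hᶜ).Adj]
    (v : Fin p ⊕ Fin q → ℝ) (hv : v ≠ 0) (heig : (graphJoin F H).lapMatrix ℝ *ᵥ v = v) :
    (q = 1 ∧ 2 ≤ p ∧ ¬ F.Connected) ∨ (p = 1 ∧ 2 ≤ q ∧ ¬ H.Connected) := by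
  have hs : ∑ i, v i = 0 := by
    conv_lhs => rw [← heig]
    exact sum_lapMatrix_mulVec _ v
  have hcard : (Fintype.card (Fin p ⊕ Fin q) : ℝ) = (p:ℝ) + q := by
    simp [Fintype.card_sum]
  have hLc : (graphJoin F H)ᶜ.lapMatrix ℝ *ᵥ v = (((p:ℝ) + q) - 1) • v := by
    have h1 : ((graphJoin F H).lapMatrix ℝ + (graphJoin F H)ᶜ.lapMatrix ℝ) *ᵥ v
        = ((p:ℝ) + q) • v := by
      rw [lapMatrix_add_compl, smul_one_sub_ones_mulVec, hs, hcard]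
      simp
    rw [Matrix.add_mulVec, heig] at h1
    funext i
    have h2 := congrFun h1 i
    simp only [Pi.add_apply, Pi.smul_apply, smul_eq_mul] at h2 ⊢
    linarith
  have hblocks : (graphJoin F H)ᶜ.lapMatrix ℝ
      = Matrix.fromBlocks (Fᶜ.lapMatrix ℝ) 0 0 (Hᶜ.lapMatrix ℝ) := by
    rw [lapMatrix_congr (compl_graphJoin F H), lapMatrix_graphUnion]
  set x : Fin p → ℝ := fun a => v (Sum.inl a) with hxdef
  set y : Fin q → ℝ := fun b => v (Sum.inr b) with hydef
  have hvelim : v = Sum.elim x y := by funext z; cases z <;> rfl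
  rw [hblocks, hvelim, Matrix.fromBlocks_mulVec] at hLc
  rw [Sum.elim_comp_inl, Sum.elim_comp_inr] at hLc
  have hxeig : Fᶜ.lapMatrix ℝ *ᵥ x = (((p:ℝ) + q) - 1) • x := by
    funext a
    have h := congrFun hLc (Sum.inl a)
    simpa using h
  have hyeig : Hᶜ.lapMatrix ℝ *ᵥ y = (((q:ℝ) + p) - 1) • y := by
    funext b
    have h := congrFun hLc (Sum.inr b)
    simp only [Sum.elim_inr, Matrix.zero_mulVec, Pi.add_apply, Pi.zero_apply, zero_add,
      Pi.smul_apply, smul_eq_mul] at h ⊢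
    rw [h]; ring
  by_cases hxz : x = 0
  · have hyz : y ≠ 0 := by
      intro hy0
      apply hv
      rw [hvelim, hxz, hy0]
      funext z; cases z <;> rfl
    exact Or.inr (side_core hp H y hyz hyeig)
  · exact Or.inl (side_core hq F x hxz hxeig)

lemma backward_core {p : ℕ} (F : SimpleGraph (Fin p)) [DecidableRel F.Adj]
    [DecidableRel Fᶜ.Adj] [DecidableRel (graphJoin F K1).Adj]
    [DecidableRel (graphJoin F K1)ᶜ.Adj] [DecidableRel (graphUnion Fᶜ K1ᶜ).Adj]
    [DecidableRel K1ᶜ.Adj]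
    (hp2 : 2 ≤ p) (hFc : ¬ F.Connected) :
    ∃ v : Fin p ⊕ Fin 1 → ℝ, v ≠ 0 ∧ (graphJoin F K1).lapMatrix ℝ *ᵥ v = v := by
  classical
  have hne : Nonempty (Fin p) := ⟨⟨0, by omega⟩⟩
  obtain ⟨i, j, hij⟩ : ∃ i j : Fin p, ¬ F.Reachable i j := by
    by_contra hall
    push_neg at hall
    exact hFc ⟨fun u w => hall u w⟩
  set C : Finset (Fin p) := Finset.univ.filter (fun w => F.Reachable i w) with hC
  set D : Finset (Fin p) := Finset.univ.filter (fun w => F.Reachable j w) with hD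
  set x : Fin p → ℝ := fun w => (if F.Reachable i w then (D.card : ℝ) else 0)
      + (if F.Reachable j w then -(C.card : ℝ) else 0) with hxdef
  have hDpos : 0 < D.card := Finset.card_pos.2 ⟨j, Finset.mem_filter.2 ⟨Finset.mem_univ _, SimpleGraph.Reachable.refl j⟩⟩
  have hxi : x i = D.card := by
    simp only [hxdef]
    rw [if_pos (SimpleGraph.Reachable.refl i),
      if_neg (fun h : F.Reachable j i => hij h.symm), add_zero]
  have hxne : x ≠ 0 := by
    intro h0
    have h1 := congrFun h0 i
    rw [hxi] at h1
    simp only [Pi.zero_apply, Nat.cast_eq_zero] at h1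
    omega
  have hsum : ∑ k, x k = 0 := by
    simp only [hxdef]
    rw [Finset.sum_add_distrib]
    have h1 : ∑ w, (if F.Reachable i w then (D.card:ℝ) else 0) = (C.card : ℝ) * D.card := by
      rw [← Finset.sum_filter, ← hC, Finset.sum_const, nsmul_eq_mul]
    have h2 : ∑ w, (if F.Reachable j w then -(C.card:ℝ) else 0)
        = (D.card : ℝ) * -(C.card : ℝ) := by
      rw [← Finset.sum_filter, ← hD, Finset.sum_const, nsmul_eq_mul]
    rw [h1, h2]; ring
  have hker : F.lapMatrix ℝ *ᵥ x = 0 := by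
    have hconst : ∀ u w, F.Reachable u w → x u = x w := by
      intro u w h
      have e1 : F.Reachable i u ↔ F.Reachable i w :=
        ⟨fun t => t.trans h, fun t => t.trans h.symm⟩
      have e2 : F.Reachable j u ↔ F.Reachable j w :=
        ⟨fun t => t.trans h, fun t => t.trans h.symm⟩
      simp only [hxdef, e1, e2]
    have h := (F.lapMatrix_mulVec_eq_zero_iff_forall_reachable (x := x)).2 hconst
    exact h
  refine ⟨Sum.elim x 0, ?_, ?_⟩
  · intro h0
    exact hxne (funext fun a => congrFun h0 (Sum.inl a))
  · have hFcompl : Fᶜ.lapMatrix ℝ *ᵥ x = (p:ℝ) • x := by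
      have h1 : (F.lapMatrix ℝ + Fᶜ.lapMatrix ℝ) *ᵥ x = (p:ℝ) • x := by
        rw [lapMatrix_add_compl, smul_one_sub_ones_mulVec, hsum]
        simp
      rw [Matrix.add_mulVec, hker, zero_add] at h1
      exact h1
    have hblocks : (graphJoin F K1)ᶜ.lapMatrix ℝ
        = Matrix.fromBlocks (Fᶜ.lapMatrix ℝ) 0 0 (K1ᶜ.lapMatrix ℝ) := by
      rw [lapMatrix_congr (compl_graphJoin F K1), lapMatrix_graphUnion]
    have hsum' : ∑ z, Sum.elim x (0 : Fin 1 → ℝ) z = 0 := by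
      rw [Fintype.sum_sum_type]
      simpa using hsum
    have h1 : ((graphJoin F K1).lapMatrix ℝ + (graphJoin F K1)ᶜ.lapMatrix ℝ) *ᵥ Sum.elim x 0
        = ((p:ℝ) + 1) • Sum.elim x 0 := by
      rw [lapMatrix_add_compl, smul_one_sub_ones_mulVec, hsum']
      simp [Fintype.card_sum]
    have h2 : (graphJoin F K1)ᶜ.lapMatrix ℝ *ᵥ Sum.elim x 0 = Sum.elim ((p:ℝ) • x) 0 := by
      rw [hblocks, Matrix.fromBlocks_mulVec, Sum.elim_comp_inl, Sum.elim_comp_inr, hFcompl]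
      simp
    rw [Matrix.add_mulVec, h2] at h1
    funext z
    have h3 := congrFun h1 z
    cases z with
    | inl a =>
      simp only [Pi.add_apply, Sum.elim_inl, Pi.smul_apply, smul_eq_mul] at h3 ⊢
      linarith
    | inr b =>
      simp only [Pi.add_apply, Sum.elim_inr, Pi.smul_apply, Pi.zero_apply, smul_eq_mul,
        mul_zero] at h3 ⊢
      linarith

lemma one_mem_lapSpec_iff {V : Type*} [Fintype V] [DecidableEq V] (G : SimpleGraph V)
    [inst : DecidableRel G.Adj] :
    (1:ℝ) ∈ lapSpec G ↔ ∃ v : V → ℝ, v ≠ 0 ∧ G.lapMatrix ℝ *ᵥ v = v := by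
  unfold lapSpec
  rw [lapMatrix_congr rfl (i1 := Classical.decRel G.Adj) (i2 := inst)]
  exact one_mem_roots_charpoly_iff _

lemma lapSpec_eq_of_iso {V W : Type*} [Fintype V] [DecidableEq V] [Fintype W] [DecidableEq W]
    {G : SimpleGraph V} {G' : SimpleGraph W} (e : G ≃g G') : lapSpec G = lapSpec G' := by
  unfold lapSpec
  congr 1
  exact @charpoly_eq_of_iso _ _ _ _ _ _ _ _ e (Classical.decRel _) (Classical.decRel _)

/-- For a graph `G` which is a join of two nonempty graphs, `1` is a Laplacian eigenvalue of
`G` if and only if `G = F ∨ K₁` where `F` is a disconnected graph of order at least `2`. -/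
theorem one_mem_lapSpec_join_iff {V : Type*} [Fintype V] [DecidableEq V]
    (G : SimpleGraph V) (hG : IsJoin G) :
    (1 : ℝ) ∈ lapSpec G ↔
      ∃ (p : ℕ) (F : SimpleGraph (Fin p)), 2 ≤ p ∧ ¬ F.Connected ∧
        Nonempty (G ≃g graphJoin F K1) := by

  classical
  constructor
  · intro h1
    obtain ⟨p, q, F, H, hp, hq, ⟨e⟩⟩ := hG
    rw [lapSpec_eq_of_iso e, one_mem_lapSpec_iff] at h1
    obtain ⟨v, hv, heig⟩ := h1
    rcases forward_core hp hq F H v hv heig with ⟨rfl, hp2, hFc⟩ | ⟨rfl, hq2, hHc⟩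
    · exact ⟨p, F, hp2, hFc, graph_fin_one_eq_K1 H ▸ (⟨e⟩ : Nonempty (G ≃g graphJoin F H))⟩
    · exact ⟨q, H, hq2, hHc, graph_fin_one_eq_K1 F ▸
        (⟨e.trans (joinComm F H)⟩ : Nonempty (G ≃g graphJoin H F))⟩
  · rintro ⟨p, F, hp2, hFc, ⟨e⟩⟩
    rw [lapSpec_eq_of_iso e, one_mem_lapSpec_iff]
    exact backward_core F hp2 hFc
end

section
/- Let n ≥ 3, let 0 < i < j ≤ n and 1 ≤ m ≤ n, and suppose a simple graph G of order n has Laplacian spectrum equal (as a multiset) to {0,1,2,...,n} \ {i,j} with the element m doubled. If n ≡ 0 or 3 (mod 4), then i + j and m have the same parity; if n ≡ 1 or 2 (mod 4), then i + j and m have opposite parity. -/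
open SimpleGraph Polynomial

lemma tri_parity_aux (n R : ℕ) (h : 2 * R = n * (n + 1)) :
    (R % 2 = 0 ↔ (n % 4 = 0 ∨ n % 4 = 3)) := by
  obtain ⟨k, r, hr4, rfl⟩ : ∃ k r, r < 4 ∧ n = 4 * k + r :=
    ⟨n / 4, n % 4, Nat.mod_lt _ (by norm_num), by omega⟩
  have hsq : (4 * k + r) * (4 * k + r + 1) =
      16 * (k * k) + 8 * (k * r) + 4 * k + r * r + r := by ring
  rw [hsq] at h
  generalize k * k = A at h
  generalize k * r = B at h
  interval_cases r <;> omega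

/-- Parity condition: if a graph of order `n` realizes `S_{{i,j},n}^m`, then for
`n ≡ 0, 3 (mod 4)` the numbers `i+j` and `m` have the same parity, and for
`n ≡ 1, 2 (mod 4)` they have opposite parity. -/
theorem parity_condition {V : Type*} [Fintype V] [DecidableEq V] (G : SimpleGraph V)
    (n i j m : ℕ) (hn : 3 ≤ n) (hcard : Fintype.card V = n)
    (hi : 0 < i) (hij : i < j) (hj : j ≤ n) (hm1 : 1 ≤ m) (hmn : m ≤ n)
    (hmi : m ≠ i) (hmj : m ≠ j)
    (hspec : lapSpec G = Sdouble i j n m) :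
    ((n % 4 = 0 ∨ n % 4 = 3) → (i + j) % 2 = m % 2) ∧
    ((n % 4 = 1 ∨ n % 4 = 2) → (i + j) % 2 ≠ m % 2) := by
  letI := Classical.decRel G.Adj
  have hspec' : ((G.lapMatrix ℝ).charpoly).roots = Sdouble i j n m := hspec
  have hne : Nonempty V := Fintype.card_pos_iff.mp (by omega)
  have hiR : i ∈ (Finset.range (n + 1)).val := by
    rw [Finset.range_val]; exact Multiset.mem_range.mpr (by omega)
  have hjR : j ∈ (Finset.range (n + 1)).val.erase i := by
    refine (Multiset.mem_erase_of_ne (by omega)).mpr ?_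
    rw [Finset.range_val]; exact Multiset.mem_range.mpr (by omega)
  have hcardR : Multiset.card (Finset.range (n + 1)).val = n + 1 := by simp
  have hcardS : Multiset.card (Sdouble i j n m) = n := by
    rw [Sdouble, Multiset.card_map, Multiset.card_cons,
      Multiset.card_erase_of_mem hjR, Multiset.card_erase_of_mem hiR, hcardR]
    simp only [Nat.pred_eq_sub_one]
    omega
  have hdeg : ((G.lapMatrix ℝ).charpoly).natDegree = n := by
    rw [Matrix.charpoly_natDegree_eq_dim, hcard]
  have hmonic : ((G.lapMatrix ℝ).charpoly).Monic := Matrix.charpoly_monic _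
  have hsplits : ((G.lapMatrix ℝ).charpoly).Splits := by
    rw [Polynomial.splits_iff_card_roots, hspec', hcardS, hdeg]
  have h1 : ((G.lapMatrix ℝ).charpoly).nextCoeff = -(Sdouble i j n m).sum := by
    rw [← hspec']
    exact hsplits.nextCoeff_eq_neg_sum_roots_of_monic hmonic
  have h2 : ((G.lapMatrix ℝ).charpoly).nextCoeff
      = ((G.lapMatrix ℝ).charpoly).coeff (n - 1) := by
    rw [Polynomial.nextCoeff_of_natDegree_pos (by omega), hdeg]
  have h3 : (G.lapMatrix ℝ).trace = -((G.lapMatrix ℝ).charpoly).coeff (n - 1) := by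
    rw [Matrix.trace_eq_neg_charpoly_coeff, hcard]
  have hsum : (Sdouble i j n m).sum = (G.lapMatrix ℝ).trace := by
    rw [h3, ← h2, h1, neg_neg]
  have htr : (G.lapMatrix ℝ).trace = ((∑ v, G.degree v : ℕ) : ℝ) := by
    simp [SimpleGraph.lapMatrix, Matrix.trace, SimpleGraph.degMatrix, Matrix.diag]
  set s : Multiset ℕ := ((Finset.range (n + 1)).val.erase i).erase j with hs
  have hsumS : (Sdouble i j n m).sum = (((m ::ₘ s).sum : ℕ) : ℝ) := by
    rw [Sdouble, Nat.cast_multiset_sum]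
  have hEeq : ∑ v, G.degree v = (m ::ₘ s).sum := by
    have h4 : ((∑ v, G.degree v : ℕ) : ℝ) = (((m ::ₘ s).sum : ℕ) : ℝ) := by
      rw [← htr, ← hsum, hsumS]
    exact_mod_cast h4
  have hRsum : s.sum + i + j = (Finset.range (n + 1)).val.sum := by
    have he1 : j ::ₘ s = (Finset.range (n + 1)).val.erase i := Multiset.cons_erase hjR
    have he2 : i ::ₘ (Finset.range (n + 1)).val.erase i = (Finset.range (n + 1)).val :=
      Multiset.cons_erase hiR
    have he3 := congrArg Multiset.sum he2
    rw [← he1, Multiset.sum_cons, Multiset.sum_cons] at he3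
    omega
  have hgauss : 2 * (Finset.range (n + 1)).val.sum = n * (n + 1) := by
    have hg : (∑ x ∈ Finset.range (n + 1), x) * 2 = (n + 1) * n := by
      simpa using Finset.sum_range_id_mul_two (n + 1)
    have hv : (Finset.range (n + 1)).val.sum = ∑ x ∈ Finset.range (n + 1), x := by
      simp [Finset.sum]
    rw [hv, mul_comm 2, hg, mul_comm]
  have heven : ∑ v, G.degree v = 2 * G.edgeFinset.card :=
    SimpleGraph.sum_degrees_eq_twice_card_edges G
  have hcons : (m ::ₘ s).sum = m + s.sum := Multiset.sum_cons m s
  set R := (Finset.range (n + 1)).val.sum with hR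
  have hkey := tri_parity_aux n R hgauss
  omega
end

section
/- Let n ≥ 3 and suppose a simple connected graph G of order n realizes the multiset S_{{i,j},n}^m = ({0,1,...,n} \ {i,j}) with m doubled, where 0 < i < j ≤ n. Then the graph K₁ ∨ (K₁ ∪ G) on n+2 vertices realizes S_{{i+1,j+1},n+2}^{m+1}. -/
open SimpleGraph Polynomial

set_option linter.unusedSectionVars false

section Aux

variable {α β : Type*}

lemma graphUnion_adj (G : SimpleGraph α) (H : SimpleGraph β) (x y : α ⊕ β) :
    (graphUnion G H).Adj x y ↔
      (∃ a b, x = Sum.inl a ∧ y = Sum.inl b ∧ G.Adj a b) ∨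
      (∃ a b, x = Sum.inr a ∧ y = Sum.inr b ∧ H.Adj a b) := by
  show (SimpleGraph.fromRel _).Adj x y ↔ _
  rw [SimpleGraph.fromRel_adj]
  constructor
  · rintro ⟨hne, (⟨a,b,hx,hy,hab⟩|⟨a,b,hx,hy,hab⟩)|(⟨a,b,hy,hx,hab⟩|⟨a,b,hy,hx,hab⟩)⟩
    · exact Or.inl ⟨a,b,hx,hy,hab⟩
    · exact Or.inr ⟨a,b,hx,hy,hab⟩
    · exact Or.inl ⟨b,a,hx,hy,hab.symm⟩
    · exact Or.inr ⟨b,a,hx,hy,hab.symm⟩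
  · rintro (⟨a,b,hx,hy,hab⟩|⟨a,b,hx,hy,hab⟩) <;> subst hx <;> subst hy
    · exact ⟨by simpa using hab.ne, Or.inl (Or.inl ⟨a,b,rfl,rfl,hab⟩)⟩
    · exact ⟨by simpa using hab.ne, Or.inl (Or.inr ⟨a,b,rfl,rfl,hab⟩)⟩

lemma graphUnionK1_adj (G : SimpleGraph α) (x y : Fin 1 ⊕ α) :
    (graphUnion K1 G).Adj x y ↔ ∃ a b, x = Sum.inr a ∧ y = Sum.inr b ∧ G.Adj a b := by
  rw [graphUnion_adj]
  simp [K1]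

lemma graphJoinK1_adj (G : SimpleGraph α) (x y : Fin 1 ⊕ α) :
    (graphJoin K1 G).Adj x y ↔
      (∃ a b, x = Sum.inr a ∧ y = Sum.inr b ∧ G.Adj a b) ∨
      (∃ a b, x = Sum.inl a ∧ y = Sum.inr b) ∨
      (∃ a b, x = Sum.inr a ∧ y = Sum.inl b) := by
  show (SimpleGraph.fromRel _).Adj x y ↔ _
  rw [SimpleGraph.fromRel_adj]
  simp only [K1, SimpleGraph.bot_adj, false_and, and_false, exists_false, false_or]
  constructor
  · rintro ⟨hne, (⟨a,b,hx,hy,hab⟩|⟨a,b,hx,hy⟩)|(⟨a,b,hy,hx,hab⟩|⟨a,b,hy,hx⟩)⟩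
    · exact Or.inl ⟨a,b,hx,hy,hab⟩
    · exact Or.inr (Or.inl ⟨a,b,hx,hy⟩)
    · exact Or.inl ⟨b,a,hx,hy,hab.symm⟩
    · exact Or.inr (Or.inr ⟨b,a,hx,hy⟩)
  · rintro (⟨a,b,hx,hy,hab⟩|⟨a,b,hx,hy⟩|⟨a,b,hx,hy⟩) <;> subst hx <;> subst hy
    · exact ⟨by simpa using hab.ne, Or.inl (Or.inl ⟨a,b,rfl,rfl,hab⟩)⟩
    · exact ⟨by simp, Or.inl (Or.inr ⟨a,b,rfl,rfl⟩)⟩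
    · exact ⟨by simp, Or.inr (Or.inr ⟨b,a,rfl,rfl⟩)⟩

lemma compl_graphJoinK1 (H : SimpleGraph α) : (graphJoin K1 H)ᶜ = graphUnion K1 Hᶜ := by
  ext x y
  rw [SimpleGraph.compl_adj, graphUnionK1_adj, graphJoinK1_adj]
  rcases x with z | a <;> rcases y with w | b
  · simp [Subsingleton.elim z w]
  · simp
  · simp
  · simp [SimpleGraph.compl_adj, Sum.inr.injEq, not_or]

lemma lapMatrix_apply' {γ : Type*} [Fintype γ] [DecidableEq γ] (G : SimpleGraph γ)
    [DecidableRel G.Adj] (x y : γ) :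
    G.lapMatrix ℝ x y = (if x = y then (G.degree x : ℝ) else 0) - (if G.Adj x y then 1 else 0) := by
  simp [SimpleGraph.lapMatrix, SimpleGraph.degMatrix, Matrix.diagonal_apply, Matrix.sub_apply]

end Aux

section Aux2

open Matrix

variable {α : Type*} [Fintype α] [DecidableEq α]

lemma graphUnionK1_neighborFinset_inr (G : SimpleGraph α)
    [DecidableRel G.Adj] [DecidableRel (graphUnion K1 G).Adj] (a : α) :
    (graphUnion K1 G).neighborFinset (Sum.inr a) =
      (G.neighborFinset a).map ⟨Sum.inr, Sum.inr_injective⟩ := by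
  ext y
  rcases y with z | b <;>
    simp [SimpleGraph.mem_neighborFinset, graphUnionK1_adj]

lemma graphUnionK1_degree_inr (G : SimpleGraph α)
    [DecidableRel G.Adj] [DecidableRel (graphUnion K1 G).Adj] (a : α) :
    (graphUnion K1 G).degree (Sum.inr a) = G.degree a := by
  unfold SimpleGraph.degree
  rw [graphUnionK1_neighborFinset_inr, Finset.card_map]

lemma graphUnionK1_degree_inl (G : SimpleGraph α)
    [DecidableRel (graphUnion K1 G).Adj] (z : Fin 1) :
    (graphUnion K1 G).degree (Sum.inl z) = 0 := by
  rw [SimpleGraph.degree, Finset.card_eq_zero]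
  ext y
  simp [SimpleGraph.mem_neighborFinset, graphUnionK1_adj]

lemma lapMatrix_graphUnionK1 (G : SimpleGraph α)
    [DecidableRel G.Adj] [DecidableRel (graphUnion K1 G).Adj] :
    (graphUnion K1 G).lapMatrix ℝ = Matrix.fromBlocks 0 0 0 (G.lapMatrix ℝ) := by
  ext x y
  rcases x with z | a <;> rcases y with w | b
  · simp [lapMatrix_apply', Matrix.fromBlocks, Subsingleton.elim z w,
      graphUnionK1_degree_inl, graphUnionK1_adj]
  · simp [lapMatrix_apply', Matrix.fromBlocks, graphUnionK1_adj]
  · simp [lapMatrix_apply', Matrix.fromBlocks, graphUnionK1_adj]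
  · simp [lapMatrix_apply', Matrix.fromBlocks, graphUnionK1_adj,
      graphUnionK1_degree_inr, Sum.inr.injEq]

lemma charpoly_zero_fin_one : (0 : Matrix (Fin 1) (Fin 1) ℝ).charpoly = X := by
  rw [Matrix.charpoly, Matrix.det_fin_one]
  simp [Matrix.charmatrix_apply_eq]

lemma charpoly_graphUnionK1 (G : SimpleGraph α)
    [DecidableRel G.Adj] [DecidableRel (graphUnion K1 G).Adj] :
    ((graphUnion K1 G).lapMatrix ℝ).charpoly = X * (G.lapMatrix ℝ).charpoly := by
  rw [lapMatrix_graphUnionK1, Matrix.charpoly_fromBlocks_zero₁₂, charpoly_zero_fin_one]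

lemma lapMatrix_compl (H : SimpleGraph α)
    [DecidableRel H.Adj] [DecidableRel Hᶜ.Adj] :
    Hᶜ.lapMatrix ℝ = (Fintype.card α : ℝ) • (1 : Matrix α α ℝ)
      - Matrix.of (fun _ _ => (1:ℝ)) - H.lapMatrix ℝ := by
  ext x y
  by_cases h : x = y
  · subst h
    have hlt : H.degree x < Fintype.card α := H.degree_lt_card_verts x
    have hdeg : Hᶜ.degree x = Fintype.card α - 1 - H.degree x := H.degree_compl x
    have h1 : 1 ≤ Fintype.card α := Fintype.card_pos_iff.mpr ⟨x⟩
    have h2 : H.degree x ≤ Fintype.card α - 1 := Nat.le_sub_one_of_lt hlt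
    simp only [lapMatrix_apply', if_pos rfl, SimpleGraph.irrefl, if_false, sub_zero,
      Matrix.sub_apply, Matrix.smul_apply, Matrix.one_apply_eq, Matrix.of_apply, smul_eq_mul,
      mul_one, hdeg]
    rw [Nat.cast_sub h2, Nat.cast_sub h1]
    push_cast
    ring
  · have hiff : Hᶜ.Adj x y ↔ ¬ H.Adj x y := by simp [SimpleGraph.compl_adj, h]
    by_cases ha : H.Adj x y <;>
      simp [lapMatrix_apply', Matrix.one_apply, h, hiff, ha]

end Aux2

section Aux3

open Matrix

variable {α : Type*} [Fintype α] [DecidableEq α]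

lemma lapMatrix_map_mulVec_one (H : SimpleGraph α) [DecidableRel H.Adj] :
    (H.lapMatrix ℝ).map Polynomial.C *ᵥ (fun _ => (1 : ℝ[X])) = 0 := by
  have h0 : (H.lapMatrix ℝ) *ᵥ (fun _ => (1:ℝ)) = 0 := by
    ext1 i
    rw [SimpleGraph.lapMatrix_mulVec_apply]
    simp
  funext u
  have := congrFun h0 u
  simp only [Matrix.mulVec, dotProduct, mul_one, Pi.zero_apply] at this ⊢
  simp only [Matrix.map_apply, ← Polynomial.C_eq_natCast]
  rw [← map_sum, this, map_zero]

lemma lapCharpolyCompl (H : SimpleGraph α)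
    [DecidableRel H.Adj] [DecidableRel Hᶜ.Adj] :
    (Polynomial.C ((Fintype.card α : ℝ)) - X) * (Hᶜ.lapMatrix ℝ).charpoly =
      (-1) ^ (Fintype.card α + 1) * X *
        ((H.lapMatrix ℝ).charpoly.comp (Polynomial.C ((Fintype.card α : ℝ)) - X)) := by
  set N : ℝ := (Fintype.card α : ℝ) with hN
  set q : ℝ[X] := Polynomial.C N - X with hq
  have hq0 : q ≠ 0 := by
    rw [hq, ← neg_sub]
    exact neg_ne_zero.mpr (Polynomial.X_sub_C_ne_zero N)
  set L : Matrix α α ℝ := H.lapMatrix ℝ with hL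
  set M : Matrix α α ℝ[X] := q • (1 : Matrix α α ℝ[X]) - L.map Polynomial.C with hM
  set Jc : Matrix α α ℝ[X] := Matrix.of (fun _ _ => (1:ℝ[X])) with hJc
  -- step 1 : charmatrix of complement
  have step1 : Matrix.charmatrix (Hᶜ.lapMatrix ℝ) = -(M - Jc) := by
    rw [lapMatrix_compl H]
    ext x y : 1
    by_cases h : x = y
    · subst h
      simp only [Matrix.charmatrix_apply, hM, hJc, hq, Matrix.diagonal_apply_eq,
        Matrix.sub_apply, Matrix.smul_apply, Matrix.neg_apply, Matrix.of_apply, smul_eq_mul,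
        Matrix.one_apply_eq, Matrix.map_apply, map_sub, mul_one, Polynomial.C_1]
      ring
    · simp only [Matrix.charmatrix_apply, hM, hJc, hq, Matrix.diagonal_apply_ne _ h,
        Matrix.sub_apply, Matrix.smul_apply, Matrix.neg_apply, Matrix.of_apply, smul_eq_mul,
        Matrix.one_apply_ne h, Matrix.map_apply, map_sub, mul_zero, Polynomial.C_1,
        Polynomial.C_0]
      ring
  -- step 2
  have step2 : (Hᶜ.lapMatrix ℝ).charpoly = (-1) ^ (Fintype.card α) * (M - Jc).det := by
    rw [Matrix.charpoly, step1, Matrix.det_neg]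
  -- step 3 : det M = charpoly L ∘ q
  have step3 : M.det = L.charpoly.comp q := by
    have hMeq : M = (Matrix.charmatrix L).map (Polynomial.eval₂RingHom Polynomial.C q) := by
      ext x y : 1
      by_cases h : x = y
      · subst h
        simp [Matrix.charmatrix_apply, hM, Matrix.one_apply_eq, Matrix.diagonal_apply_eq]
      · simp [Matrix.charmatrix_apply, hM, Matrix.one_apply_ne h, Matrix.diagonal_apply_ne _ h, h]
    rw [hMeq, ← RingHom.mapMatrix_apply, ← RingHom.map_det]
    rw [Matrix.charpoly]
    simp [Polynomial.comp, Polynomial.coe_eval₂RingHom]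
  -- step 4 : det M ≠ 0
  have hqdeg : q.natDegree = 1 := by
    rw [hq, ← neg_sub, natDegree_neg, natDegree_X_sub_C]
  have step4 : M.det ≠ 0 := by
    rw [step3]
    have hmon : L.charpoly.Monic := Matrix.charpoly_monic L
    intro hcontra
    have hlc := Polynomial.leadingCoeff_comp (p := L.charpoly) (q := q) (by rw [hqdeg]; norm_num)
    rw [hcontra, Polynomial.leadingCoeff_zero, hmon.leadingCoeff, one_mul] at hlc
    have hqlc : q.leadingCoeff = -1 := by
      rw [hq, ← neg_sub, leadingCoeff_neg, Polynomial.leadingCoeff_X_sub_C]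
    rw [hqlc] at hlc
    have : ((-1 : ℝ)) ^ L.charpoly.natDegree ≠ 0 := by
      simp
    exact this hlc.symm
  -- step 5 : the key determinant identity
  have key : q * (M - Jc).det = (q - Polynomial.C N) * M.det := by
    set K := FractionRing ℝ[X]
    set φ : ℝ[X] →+* K := algebraMap ℝ[X] K with hφdef
    have hφ : Function.Injective φ := IsFractionRing.injective _ _
    apply hφ
    have hMdet : φ M.det ≠ 0 := fun h => step4 (hφ (h.trans (map_zero φ).symm))
    rw [_root_.map_mul, _root_.map_mul, RingHom.map_det, RingHom.map_det,
      RingHom.mapMatrix_apply, RingHom.mapMatrix_apply]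
    set A := M.map ⇑φ with hA
    have hAdet : A.det = φ M.det := by
      rw [RingHom.map_det, RingHom.mapMatrix_apply]
    have hu : IsUnit A.det := by
      rw [hAdet]
      exact isUnit_iff_ne_zero.mpr hMdet
    have hqK : φ q ≠ 0 := fun h => hq0 (hφ (h.trans (map_zero φ).symm))
    -- A *ᵥ 1 = φ q • 1
    have hM1 : M *ᵥ (fun _ => (1:ℝ[X])) = q • (fun _ => (1:ℝ[X])) := by
      rw [hM, Matrix.sub_mulVec, lapMatrix_map_mulVec_one H, sub_zero,
        Matrix.smul_mulVec, Matrix.one_mulVec]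
    have hA1 : A *ᵥ (fun _ => (1:K)) = φ q • (fun _ => (1:K)) := by
      funext u
      have := congrFun hM1 u
      simp only [Matrix.mulVec, dotProduct, mul_one, Pi.smul_apply, smul_eq_mul] at this ⊢
      rw [hA]
      simp only [Matrix.map_apply]
      rw [← map_sum, this]
    have hAinv1 : A⁻¹ *ᵥ (fun _ => (1:K)) = (φ q)⁻¹ • (fun _ => (1:K)) := by
      have h2 : A⁻¹ *ᵥ (A *ᵥ (fun _ => (1:K))) = (fun _ => (1:K)) := by
        rw [Matrix.mulVec_mulVec, Matrix.nonsing_inv_mul A hu, Matrix.one_mulVec]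
      rw [hA1, Matrix.mulVec_smul] at h2
      calc A⁻¹ *ᵥ (fun _ => (1:K))
          = (φ q)⁻¹ • (φ q • (A⁻¹ *ᵥ (fun _ => (1:K)))) := by
            rw [smul_smul, inv_mul_cancel₀ hqK, one_smul]
        _ = (φ q)⁻¹ • (fun _ => (1:K)) := by rw [h2]
    -- the determinant computation
    have hmap : (M - Jc).map φ = A + Matrix.replicateCol Unit (fun _ : α => (-1:K)) * Matrix.replicateRow Unit (fun _ : α => (1:K)) := by
      ext x y
      simp [hA, hJc, Matrix.map_apply, Matrix.mul_apply, Matrix.replicateCol, Matrix.replicateRow, map_sub]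
      ring
    rw [hmap, Matrix.det_add_replicateCol_mul_replicateRow hu]
    have hrowcol : Matrix.replicateRow Unit (fun _ : α => (1:K)) * A⁻¹ * Matrix.replicateCol Unit (fun _ : α => (-1:K))
        = Matrix.of (fun _ _ : Unit => -(Fintype.card α : K) * (φ q)⁻¹) := by
      rw [Matrix.mul_assoc, ← Matrix.replicateCol_mulVec]
      have hneg : A⁻¹ *ᵥ (fun _ : α => (-1:K)) = fun _ => -(φ q)⁻¹ := by
        have h' : (fun _ : α => (-1:K)) = -(fun _ : α => (1:K)) := by funext; simp
        rw [h', Matrix.mulVec_neg, hAinv1]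
        funext u
        simp
      rw [hneg]
      ext x y
      simp [Matrix.mul_apply, Matrix.replicateRow, Matrix.replicateCol, dotProduct, Finset.sum_neg_distrib]
      ring
    rw [hrowcol]
    have hdet1 : (1 + Matrix.of (fun _ _ : Unit => -(Fintype.card α : K) * (φ q)⁻¹)).det
        = 1 - (Fintype.card α : K) * (φ q)⁻¹ := by
      rw [Matrix.det_unique]
      simp [Matrix.one_apply]
      ring
    rw [hdet1]
    have hφCN : φ (Polynomial.C N) = (Fintype.card α : K) := by
      rw [hN, Polynomial.C_eq_natCast, map_natCast]
    have hφq : φ q = (Fintype.card α : K) - φ X := by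
      rw [hq, map_sub, hφCN]
    have hqK' : (Fintype.card α : K) - φ X ≠ 0 := hφq ▸ hqK
    simp only [hq, map_sub, hφCN]
    have e : ((Fintype.card α : K) - φ X) * (1 - (Fintype.card α : K) * ((Fintype.card α : K) - φ X)⁻¹)
        = (Fintype.card α : K) - φ X - Fintype.card α := by
      have h1 : ((Fintype.card α : K) - φ X) * ((Fintype.card α : K) - φ X)⁻¹ = 1 :=
        mul_inv_cancel₀ (G₀ := FractionRing ℝ[X]) hqK'
      linear_combination (-(Fintype.card α : K)) * h1
    rw [hAdet]
    linear_combination (φ M.det) * e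
  -- combine
  have hqCN : q - Polynomial.C N = -X := by rw [hq]; ring
  rw [step2]
  calc q * ((-1) ^ (Fintype.card α) * (M - Jc).det)
      = (-1) ^ (Fintype.card α) * (q * (M - Jc).det) := by ring
    _ = (-1) ^ (Fintype.card α) * ((q - Polynomial.C N) * M.det) := by rw [key]
    _ = (-1) ^ (Fintype.card α) * ((-X) * (L.charpoly.comp q)) := by rw [hqCN, step3]
    _ = (-1) ^ (Fintype.card α + 1) * X * (L.charpoly.comp q) := by ring

end Aux3

section Aux4

lemma lapSpec_def' {γ : Type*} [Fintype γ] [DecidableEq γ] (G : SimpleGraph γ)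
    (inst : DecidableRel G.Adj) :
    lapSpec G = (@SimpleGraph.lapMatrix γ ℝ _ G inst _ _).charpoly.roots := by
  unfold lapSpec
  congr!

lemma lapMatrix_graph_congr {γ : Type*} [Fintype γ] [DecidableEq γ] {G G' : SimpleGraph γ}
    (h : G = G') (i1 : DecidableRel G.Adj) (i2 : DecidableRel G'.Adj) :
    @SimpleGraph.lapMatrix γ ℝ _ G i1 _ _ = @SimpleGraph.lapMatrix γ ℝ _ G' i2 _ _ := by
  subst h
  congr!

lemma multiset_range_shift (k : ℕ) :
    Multiset.range (k + 1) = 0 ::ₘ (Multiset.range k).map (· + 1) := by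
  rw [show k + 1 = 1 + k by ring, Multiset.range_add]
  have h1 : Multiset.range 1 = {0} := rfl
  have h2 : (Multiset.range k).map (1 + ·) = (Multiset.range k).map (· + 1) :=
    Multiset.map_congr rfl fun x _ => by ring
  rw [h1, h2, Multiset.singleton_add]

lemma range_erase_erase (i j n : ℕ) (hi : 0 < i) (hij : i < j) (hj : j ≤ n) :
    ((Multiset.range (n + 3)).erase (i + 1)).erase (j + 1)
      = 0 ::ₘ (n + 2) ::ₘ (((Multiset.range (n + 1)).erase i).erase j).map (· + 1) := by
  have hinj : Function.Injective (· + 1 : ℕ → ℕ) := add_left_injective 1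
  rw [show n + 3 = (n + 2) + 1 from rfl, multiset_range_shift (n + 2),
    Multiset.erase_cons_tail _ (by omega), Multiset.erase_cons_tail _ (by omega),
    ← Multiset.map_erase _ hinj, ← Multiset.map_erase _ hinj]
  congr 1
  rw [show n + 2 = (n + 1) + 1 from rfl, Multiset.range_succ,
    Multiset.erase_cons_tail _ (by omega), Multiset.erase_cons_tail _ (by omega),
    Multiset.map_cons]

lemma Sdouble_step (i j n m : ℕ) (hi : 0 < i) (hij : i < j) (hj : j ≤ n) :
    (0 : ℝ) ::ₘ ((n : ℝ) + 2) ::ₘ (Sdouble i j n m).map (· + 1)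
      = Sdouble (i + 1) (j + 1) (n + 2) (m + 1) := by
  have key : (0 : ℕ) ::ₘ (n + 2) ::ₘ
        ((m ::ₘ ((Finset.range (n + 1)).val.erase i).erase j).map (· + 1))
      = (m + 1) ::ₘ ((Finset.range (n + 2 + 1)).val.erase (i + 1)).erase (j + 1) := by
    rw [Finset.range_val, Finset.range_val, Multiset.map_cons,
      show n + 2 + 1 = n + 3 from rfl, range_erase_erase i j n hi hij hj,
      Multiset.cons_swap (n + 2) (m + 1), Multiset.cons_swap 0 (m + 1)]
  rw [Sdouble, Sdouble, Multiset.map_map]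
  have hfun : ((· + 1 : ℝ → ℝ) ∘ (fun k : ℕ => (k : ℝ)))
      = (fun k : ℕ => (k : ℝ)) ∘ (· + 1 : ℕ → ℕ) := by
    funext k; simp
  rw [hfun, ← Multiset.map_map,
    show (0 : ℝ) = ((0 : ℕ) : ℝ) by norm_num,
    show ((n : ℝ) + 2) = (((n + 2 : ℕ)) : ℝ) by push_cast; ring,
    ← Multiset.map_cons, ← Multiset.map_cons]
  rw [key]

end Aux4

/-- If a connected graph `G` of order `n` realizes `S_{{i,j},n}^m`, then the graph
`K₁ ∨ (K₁ ∪ G)` on `n + 2` vertices realizes `S_{{i+1,j+1},n+2}^{m+1}`. -/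
theorem join_union_construction {V : Type*} [Fintype V] [DecidableEq V] (G : SimpleGraph V)
    (n i j m : ℕ) (hn : 3 ≤ n) (hcard : Fintype.card V = n) (hG : G.Connected)
    (hi : 0 < i) (hij : i < j) (hj : j ≤ n) (hm1 : 1 ≤ m) (hmn : m ≤ n)
    (hmi : m ≠ i) (hmj : m ≠ j)
    (hspec : lapSpec G = Sdouble i j n m) :
    lapSpec (graphJoin K1 (graphUnion K1 G)) = Sdouble (i + 1) (j + 1) (n + 2) (m + 1) := by
  classical
  letI iG : DecidableRel G.Adj := Classical.decRel _
  letI iH : DecidableRel (graphUnion K1 G).Adj := Classical.decRel _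
  letI iHc : DecidableRel ((graphUnion K1 G)ᶜ).Adj := Classical.decRel _
  letI iF : DecidableRel (graphJoin K1 (graphUnion K1 G)).Adj := Classical.decRel _
  letI iFc : DecidableRel ((graphJoin K1 (graphUnion K1 G))ᶜ).Adj := Classical.decRel _
  letI iFcU : DecidableRel (graphUnion K1 ((graphUnion K1 G)ᶜ)).Adj := Classical.decRel _
  letI iFcc : DecidableRel (((graphJoin K1 (graphUnion K1 G))ᶜ)ᶜ).Adj := Classical.decRel _
  set S : Multiset ℝ := Sdouble i j n m with hS
  have hroots : ((G.lapMatrix ℝ).charpoly).roots = S := by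
    rw [← lapSpec_def' G iG]; exact hspec
  have hdeg : ((G.lapMatrix ℝ).charpoly).natDegree = n := by
    rw [Matrix.charpoly_natDegree_eq_dim, hcard]
  have hcardS : Multiset.card S = n := by
    have hiR : i ∈ (Finset.range (n+1)).val := by
      rw [Finset.range_val, Multiset.mem_range]; omega
    have hjR : j ∈ ((Finset.range (n+1)).val.erase i) := by
      rw [Multiset.mem_erase_of_ne (by omega)]
      rw [Finset.range_val, Multiset.mem_range]; omega
    rw [hS, Sdouble, Multiset.card_map, Multiset.card_cons,
      Multiset.card_erase_of_mem hjR, Multiset.card_erase_of_mem hiR,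
      Finset.range_val, Multiset.card_range]
    simp only [Nat.pred_eq_sub_one]
    omega
  have hmonic : ((G.lapMatrix ℝ).charpoly).Monic := Matrix.charpoly_monic _
  have hsplit : Polynomial.Splits (G.lapMatrix ℝ).charpoly := by
    rw [Polynomial.splits_iff_card_roots, hroots, hcardS, hdeg]
  have hprod : (G.lapMatrix ℝ).charpoly = (S.map fun a => X - Polynomial.C a).prod := by
    conv_lhs => rw [hsplit.eq_prod_roots_of_monic hmonic]
    rw [hroots]
  have hχH : ((graphUnion K1 G).lapMatrix ℝ).charpoly = X * (G.lapMatrix ℝ).charpoly :=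
    charpoly_graphUnionK1 G
  have hcardU : Fintype.card (Fin 1 ⊕ V) = n + 1 := by
    simp only [Fintype.card_sum, Fintype.card_fin, hcard]
    omega
  have hHc := lapCharpolyCompl (graphUnion K1 G)
  rw [hcardU, hχH] at hHc
  set q₁ : ℝ[X] := Polynomial.C (((n+1 : ℕ)) : ℝ) - X with hq₁
  have hq₁0 : q₁ ≠ 0 := by
    rw [hq₁, ← neg_sub]; exact neg_ne_zero.mpr (Polynomial.X_sub_C_ne_zero _)
  have hχHc : (((graphUnion K1 G)ᶜ).lapMatrix ℝ).charpoly
      = (-1)^(n+2) * X * ((G.lapMatrix ℝ).charpoly.comp q₁) := by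
    apply mul_left_cancel₀ hq₁0
    rw [hHc]
    simp only [Polynomial.mul_comp, Polynomial.X_comp]
    rw [show n + 1 + 1 = n + 2 from rfl]
    ring
  have hFc : (graphJoin K1 (graphUnion K1 G))ᶜ = graphUnion K1 ((graphUnion K1 G)ᶜ) :=
    compl_graphJoinK1 _
  have hχFc : (((graphJoin K1 (graphUnion K1 G))ᶜ).lapMatrix ℝ).charpoly
      = X * (((graphUnion K1 G)ᶜ).lapMatrix ℝ).charpoly := by
    rw [lapMatrix_graph_congr hFc iFc iFcU]
    exact charpoly_graphUnionK1 _
  have hcardW : Fintype.card (Fin 1 ⊕ (Fin 1 ⊕ V)) = n + 2 := by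
    simp only [Fintype.card_sum, Fintype.card_fin, hcard]
    omega
  have hF := lapCharpolyCompl ((graphJoin K1 (graphUnion K1 G))ᶜ)
  rw [hcardW] at hF
  rw [lapMatrix_graph_congr (compl_compl (graphJoin K1 (graphUnion K1 G))) iFcc iF] at hF
  set q₂ : ℝ[X] := Polynomial.C (((n+2 : ℕ)) : ℝ) - X with hq₂
  have hq₂0 : q₂ ≠ 0 := by
    rw [hq₂, ← neg_sub]; exact neg_ne_zero.mpr (Polynomial.X_sub_C_ne_zero _)
  have hq₁q₂ : q₁.comp q₂ = X - Polynomial.C 1 := by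
    rw [hq₁, hq₂]
    simp only [Polynomial.sub_comp, Polynomial.C_comp, Polynomial.X_comp]
    have h12 : (Polynomial.C (((n+2:ℕ)):ℝ)) = Polynomial.C (((n+1:ℕ)):ℝ) + Polynomial.C 1 := by
      rw [← Polynomial.C_add]
      congr 1
      push_cast
      ring
    rw [h12]
    ring
  set Pshift : ℝ[X] := (S.map fun a => X - Polynomial.C (a + 1)).prod with hPshift
  have hcompP : (G.lapMatrix ℝ).charpoly.comp (X - Polynomial.C 1) = Pshift := by
    rw [hprod, Polynomial.multiset_prod_comp, hPshift, Multiset.map_map]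
    congr 1
    apply Multiset.map_congr rfl
    intro a _
    simp only [Function.comp_apply, Polynomial.sub_comp, Polynomial.X_comp, Polynomial.C_comp]
    rw [Polynomial.C_add, Polynomial.C_1]
    ring
  have hχFccomp : ((((graphJoin K1 (graphUnion K1 G))ᶜ).lapMatrix ℝ).charpoly).comp q₂
      = (-1)^(n+2) * q₂ * q₂ * Pshift := by
    rw [hχFc, hχHc]
    simp only [Polynomial.mul_comp, Polynomial.X_comp, Polynomial.pow_comp,
      Polynomial.neg_comp, Polynomial.one_comp, Polynomial.comp_assoc, hq₁q₂, hcompP]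
    ring
  have hsign : ((-1 : ℝ[X]))^(n+3) * (-1)^(n+2) = -1 := by
    rw [← pow_add, show n+3+(n+2) = 2*(n+2)+1 by ring, pow_succ, pow_mul]
    norm_num
  have hχF : ((graphJoin K1 (graphUnion K1 G)).lapMatrix ℝ).charpoly
      = X * (X - Polynomial.C (((n+2:ℕ)):ℝ)) * Pshift := by
    apply mul_left_cancel₀ hq₂0
    rw [hF, hχFccomp, show n + 2 + 1 = n + 3 from rfl]
    calc (-1:ℝ[X])^(n+3) * X * ((-1)^(n+2) * q₂ * q₂ * Pshift)
        = ((-1:ℝ[X])^(n+3) * (-1)^(n+2)) * X * q₂ * q₂ * Pshift := by ring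
      _ = -(X * q₂ * q₂ * Pshift) := by rw [hsign]; ring
      _ = q₂ * (X * (X - Polynomial.C (((n+2:ℕ)):ℝ)) * Pshift) := by
          rw [hq₂]; ring
  have hmapfun : ((fun a : ℝ => X - Polynomial.C a) ∘ (· + 1 : ℝ → ℝ))
      = fun a : ℝ => X - Polynomial.C (a + 1) := rfl
  have hχFtotal : ((graphJoin K1 (graphUnion K1 G)).lapMatrix ℝ).charpoly
      = (((0:ℝ) ::ₘ (((n+2:ℕ)):ℝ) ::ₘ S.map (· + 1)).map fun a => X - Polynomial.C a).prod := by
    rw [hχF, Multiset.map_cons, Multiset.map_cons, Multiset.prod_cons, Multiset.prod_cons,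
      Polynomial.C_0, sub_zero, Multiset.map_map, hmapfun, ← hPshift]
    ring
  rw [lapSpec_def' _ iF, hχFtotal, Polynomial.roots_multiset_prod_X_sub_C]
  rw [← Sdouble_step i j n m hi hij hj, ← hS]
  push_cast
  rfl
end

section
/- Let n ≥ 7 be a prime number. Then for no choice of 0 < i < n and m ∉ {0,i,n} is there a simple connected graph of order n whose Laplacian spectrum equals the multiset {0,1,...,n-1} \ {i} with m counted twice. -/
open SimpleGraph Polynomial
open Matrix

lemma prod_range_erase_zero (n : ℕ) : ((Multiset.range (n+1)).erase 0).prod = n.factorial := by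
  induction n with
  | zero => simp [Multiset.range_succ]
  | succ k ih =>
    rw [Multiset.range_succ, Multiset.erase_cons_tail _ (by omega),
      Multiset.prod_cons, ih, Nat.factorial_succ]


/-- For prime `n ≥ 7`, no set `S_{{i,n},n}^m` is Laplacian realizable: there is no connected
graph of order `n` whose Laplacian spectrum is `{0,1,…,n-1} \ {i}` with `m` counted twice. -/
theorem not_realizable_prime {n i m : ℕ} (hn : 7 ≤ n) (hp : n.Prime)
    (hi : 0 < i) (hin : i < n) (hm1 : 1 ≤ m) (hmn : m ≤ n - 1) (hmi : m ≠ i) :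
    ∀ G : SimpleGraph (Fin n), G.Connected → lapSpec G ≠ Sdouble i n n m := by
  intro G hG hspec
  letI : DecidableRel G.Adj := Classical.decRel G.Adj
  have hspec' : ((G.lapMatrix ℝ).charpoly).roots = Sdouble i n n m := hspec
  -- multiset bookkeeping
  set R0 : Multiset ℕ := Multiset.range (n+1) with hR0
  set T : Multiset ℕ := (R0.erase i).erase n with hT
  set T₀ : Multiset ℕ := T.erase 0 with hT₀
  have hiR : i ∈ R0 := Multiset.mem_range.mpr (by omega)
  have hnRi : n ∈ R0.erase i :=
    (Multiset.mem_erase_of_ne (by omega)).mpr (Multiset.mem_range.mpr (by omega))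
  have h0T : (0:ℕ) ∈ T :=
    (Multiset.mem_erase_of_ne (by omega)).mpr
      ((Multiset.mem_erase_of_ne (by omega)).mpr (Multiset.mem_range.mpr (by omega)))
  have hcons : T = 0 ::ₘ T₀ := (Multiset.cons_erase h0T).symm
  have hkey : i * (n * T₀.prod) = n.factorial := by
    have h1 : R0.erase i = n ::ₘ T := (Multiset.cons_erase hnRi).symm
    have h2 : R0 = i ::ₘ n ::ₘ 0 ::ₘ T₀ := by
      rw [← hcons, ← h1, Multiset.cons_erase hiR]
    have h3 : R0.erase 0 = i ::ₘ n ::ₘ T₀ := by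
      rw [h2, Multiset.erase_cons_tail _ (by omega), Multiset.erase_cons_tail _ (by omega),
        Multiset.erase_cons_head]
    have h4 := prod_range_erase_zero n
    rw [show Multiset.range (n+1) = R0 from rfl, h3] at h4
    simpa [Multiset.prod_cons, mul_assoc] using h4
  have hT₀card : Multiset.card T₀ = n - 2 := by
    rw [hT₀, Multiset.card_erase_of_mem h0T, hT, Multiset.card_erase_of_mem hnRi,
      Multiset.card_erase_of_mem hiR, hR0, Multiset.card_range]
    simp only [Nat.pred_eq_sub_one]
    omega
  -- Sdouble decomposition
  have hSd : Sdouble i n n m = (0:ℝ) ::ₘ ((m ::ₘ T₀).map (fun k : ℕ => (k:ℝ))) := by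
    show (m ::ₘ (((Finset.range (n + 1)).val.erase i).erase n)).map _ = _
    rw [Finset.range_val, show ((Multiset.range (n+1)).erase i).erase n = T from rfl, hcons,
      Multiset.cons_swap, Multiset.map_cons, Nat.cast_zero]
  set N : ℕ := m * T₀.prod with hN
  set S₀ : Multiset ℝ := (m ::ₘ T₀).map (fun k : ℕ => (k:ℝ)) with hS₀
  set L : Matrix (Fin n) (Fin n) ℝ := G.lapMatrix ℝ with hL
  have hmono : L.charpoly.Monic := L.charpoly_monic
  have hdeg : L.charpoly.natDegree = n := by
    rw [Matrix.charpoly_natDegree_eq_dim, Fintype.card_fin]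
  have hcard : L.charpoly.roots.card = n := by
    rw [hspec', hSd]
    simp only [hS₀, Multiset.card_cons, Multiset.card_map, hT₀card]
    omega
  have hfac : (L.charpoly.roots.map (fun a => X - C a)).prod = L.charpoly :=
    prod_multiset_X_sub_C_of_monic_of_roots_card_eq hmono (by rw [hcard, hdeg])
  set q : ℝ[X] := (S₀.map (fun a => X - C a)).prod with hq
  have hXq : L.charpoly = X * q := by
    rw [← hfac, hspec', hSd, Multiset.map_cons, Multiset.prod_cons, map_zero, sub_zero]
  have hqeval : q.eval 0 = (-1:ℝ)^(n-1) * ((N : ℕ) : ℝ) := by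
    rw [hq, Polynomial.eval_multiset_prod, Multiset.map_map]
    simp only [Function.comp, eval_sub, eval_X, eval_C, zero_sub]
    rw [show ((fun a : ℝ => -a)) = (Neg.neg : ℝ → ℝ) from rfl, Multiset.prod_map_neg]
    congr 1
    · rw [hS₀]
      simp only [Multiset.card_map, Multiset.card_cons, hT₀card]
      congr 1
      omega
    · rw [hN, hS₀, ← Nat.cast_multiset_prod, Multiset.prod_cons]
  -- charmatrix part
  set cm : Matrix (Fin n) (Fin n) ℝ[X] := charmatrix L with hcm
  have hrowsum : ∀ v : Fin n, ∑ j, L v j = 0 := by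
    intro v
    have h := congrFun (G.lapMatrix_mulVec_const_eq_zero (R := ℝ)) v
    simpa [Matrix.mulVec, dotProduct] using h
  have hrow : cm *ᵥ (fun _ => (1:ℝ[X])) = fun _ => (X:ℝ[X]) := by
    funext v
    have hs : ∑ j, cm v j = X := by
      rw [hcm]
      simp only [charmatrix_apply, Finset.sum_sub_distrib, ← map_sum, hrowsum v, map_zero,
        sub_zero, Matrix.diagonal_apply, Finset.sum_ite_eq, Finset.mem_univ, if_pos]
    simp only [Matrix.mulVec, dotProduct, mul_one]
    exact hs
  have hdetcm : cm.det = X * q := by rw [hcm]; exact hXq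
  have hadj1 : adjugate cm *ᵥ (fun _ => (X:ℝ[X])) = fun _ => X * q := by
    rw [← hrow, Matrix.mulVec_mulVec, Matrix.adjugate_mul, hdetcm]
    funext v
    simp [Matrix.smul_mulVec, Matrix.one_mulVec]
  have hadjq : adjugate cm *ᵥ (fun _ => (1:ℝ[X])) = fun _ => q := by
    funext v
    have h1 : (adjugate cm *ᵥ (fun _ => (X:ℝ[X]))) v = X * q := congrFun hadj1 v
    have h2 : (adjugate cm *ᵥ (fun _ => (X:ℝ[X]))) v
        = X * ((adjugate cm *ᵥ (fun _ => (1:ℝ[X]))) v) := by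
      simp only [Matrix.mulVec, dotProduct, mul_one, Finset.mul_sum]
      exact Finset.sum_congr rfl fun j _ => mul_comm _ _
    exact mul_left_cancel₀ Polynomial.X_ne_zero ((h2.symm.trans h1))
  -- evaluation at 0
  set ev : ℝ[X] →+* ℝ := Polynomial.evalRingHom 0 with hev
  have hcmmap : cm.map ev = -L := by
    ext v w
    by_cases h : v = w
    · subst h; simp [hcm, hev]
    · simp [hcm, charmatrix_apply_ne _ _ _ h, hev, h]
  have h3 : (adjugate cm).map ev = adjugate (-L) := by
    rw [← hcmmap, ← RingHom.mapMatrix_apply, ← RingHom.mapMatrix_apply, RingHom.map_adjugate]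
  have hsum0 : ∀ v, ∑ j, (adjugate (-L)) v j = q.eval 0 := by
    intro v
    have h1 : ∑ j, adjugate cm v j = q := by
      have := congrFun hadjq v
      simpa only [Matrix.mulVec, dotProduct, mul_one] using this
    calc ∑ j, adjugate (-L) v j = ∑ j, ev (adjugate cm v j) := by
          rw [← h3]; simp [Matrix.map_apply]
      _ = ev (∑ j, adjugate cm v j) := (map_sum ev _ _).symm
      _ = ev q := congrArg ev h1
      _ = q.eval 0 := rfl
  -- adjugate (-L) is constant
  have hdet0 : (-L).det = 0 := by
    rw [← Matrix.exists_mulVec_eq_zero_iff]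
    refine ⟨fun _ => 1, ?_, ?_⟩
    · intro h; have := congrFun h ⟨0, by omega⟩; simpa using this
    · rw [Matrix.neg_mulVec, hL, lapMatrix_mulVec_const_eq_zero, neg_zero]
  have hker : ∀ x : Fin n → ℝ, L *ᵥ x = 0 → ∀ v w, x v = x w := by
    intro x hx v w
    refine (G.lapMatrix_mulVec_eq_zero_iff_forall_reachable (x := x)).mp ?_ v w
      (hG.preconnected v w)
    exact hx
  have hAcol : ∀ w v v', adjugate (-L) v w = adjugate (-L) v' w := by
    intro w v v'
    have hmul : (-L) * adjugate (-L) = 0 := by rw [Matrix.mul_adjugate, hdet0, zero_smul]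
    have hcol : L *ᵥ (fun u => adjugate (-L) u w) = 0 := by
      have h1 : (-L) *ᵥ (fun u => adjugate (-L) u w) = 0 := by
        funext u
        have := congrFun (congrFun hmul u) w
        simpa [Matrix.mul_apply, Matrix.mulVec, dotProduct] using this
      rw [Matrix.neg_mulVec, neg_eq_zero] at h1; exact h1
    exact hker _ hcol v v'
  have hAsymm : ∀ v w, adjugate (-L) v w = adjugate (-L) w v := by
    intro v w
    have h1 : (-L)ᵀ = -L := by rw [Matrix.transpose_neg, (G.isSymm_lapMatrix (R := ℝ)).eq]
    have h2 : (adjugate (-L))ᵀ = adjugate (-L) := by rw [Matrix.adjugate_transpose, h1]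
    exact (congrFun (congrFun h2 v) w).symm
  have hn0 : (0:ℕ) < n := by omega
  set v0 : Fin n := ⟨0, hn0⟩ with hv0
  set c : ℝ := adjugate (-L) v0 v0 with hc
  have hconst : ∀ v w, adjugate (-L) v w = c := by
    intro v w
    calc adjugate (-L) v w = adjugate (-L) v0 w := hAcol w v v0
      _ = adjugate (-L) w v0 := hAsymm v0 w
      _ = adjugate (-L) v0 v0 := hAcol v0 w v0
  have hnc : q.eval 0 = n * c := by
    rw [← hsum0 v0, Finset.sum_congr rfl (fun j _ => hconst v0 j), Finset.sum_const,
      Finset.card_univ, Fintype.card_fin, nsmul_eq_mul]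
  -- integrality
  have hmapL : (G.lapMatrix ℤ).map (Int.cast : ℤ → ℝ) = G.lapMatrix ℝ := by
    ext v w
    simp only [Matrix.map_apply, SimpleGraph.lapMatrix, Matrix.sub_apply, SimpleGraph.degMatrix,
      Matrix.diagonal_apply, SimpleGraph.adjMatrix_apply]
    split_ifs <;> push_cast <;> ring
  set d : ℤ := adjugate (-(G.lapMatrix ℤ)) v0 v0 with hd
  have hcd : c = (d : ℝ) := by
    have h1 : ((-(G.lapMatrix ℤ)).map (Int.cast : ℤ → ℝ)) = -L := by
      rw [hL, ← hmapL]; ext v w; simp [Matrix.map_apply]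
    have h2 := (Int.castRingHom ℝ).map_adjugate (-(G.lapMatrix ℤ))
    rw [RingHom.mapMatrix_apply, RingHom.mapMatrix_apply] at h2
    have h2' : (adjugate (-(G.lapMatrix ℤ))).map (Int.cast : ℤ → ℝ) = adjugate (-L) := by
      rw [show ((Int.castRingHom ℝ) : ℤ → ℝ) = (Int.cast : ℤ → ℝ) from rfl] at h2
      rw [h2, h1]
    rw [hc, ← h2', Matrix.map_apply]
  -- final arithmetic
  have hreal : ((N : ℕ) : ℝ) = (n:ℝ) * ((-1:ℝ)^(n-1) * (d:ℝ)) := by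
    have hsq : ((-1:ℝ)^(n-1)) * ((-1:ℝ)^(n-1)) = 1 := by
      rw [← pow_add, ← two_mul, pow_mul]; norm_num
    have h := hqeval.symm.trans (hnc.trans (by rw [hcd]))
    -- h : (-1)^(n-1) * N = n * d
    calc ((N : ℕ) : ℝ)
        = ((-1:ℝ)^(n-1) * (-1:ℝ)^(n-1)) * ((N : ℕ) : ℝ) := by rw [hsq, one_mul]
      _ = (-1:ℝ)^(n-1) * ((-1:ℝ)^(n-1) * ((N : ℕ) : ℝ)) := by ring
      _ = (-1:ℝ)^(n-1) * ((n:ℝ) * (d:ℝ)) := by rw [h]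
      _ = (n:ℝ) * ((-1:ℝ)^(n-1) * (d:ℝ)) := by ring
  have hZ : ((N : ℕ) : ℤ) = (n:ℤ) * ((-1:ℤ)^(n-1) * d) := by
    have h2 : (((N : ℕ) : ℤ) : ℝ) = (((n:ℤ) * ((-1:ℤ)^(n-1) * d) : ℤ) : ℝ) := by
      push_cast
      exact hreal
    exact_mod_cast h2
  have hdvd : n ∣ m * T₀.prod := by
    rw [← hN]
    have h4 : (n:ℤ) ∣ ((N : ℕ) : ℤ) := ⟨_, hZ⟩
    exact_mod_cast h4
  rcases (Nat.Prime.dvd_mul hp).mp hdvd with h | h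
  · have := Nat.le_of_dvd (by omega) h; omega
  · have hfac2 : i * T₀.prod = (n-1).factorial := by
      have heq : n * (i * T₀.prod) = n * (n-1).factorial := by
        rw [Nat.mul_factorial_pred (by omega), ← hkey]; ring
      exact Nat.eq_of_mul_eq_mul_left (by omega) heq
    have hdf : n ∣ (n-1).factorial := hfac2 ▸ Dvd.dvd.mul_left h i
    have := (Nat.Prime.dvd_factorial hp).mp hdf
    omega
end

section
/- Let n ≥ 9 and suppose a simple connected graph G of order n has Laplacian spectrum equal to the multiset {0,1,...,n} \ {i,j} with some element m counted twice (0 < i < j ≤ n), i.e., G has integer Laplacian eigenvalues with exactly one repeated eigenvalue, repeated exactly twice. Then G is not the Cartesian product of two graphs each having at least 2 vertices. -/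
open SimpleGraph Polynomial

section AuxLemmas

open Matrix

lemma eval_charpoly_eq_det' {V : Type*} [Fintype V] [DecidableEq V] (M : Matrix V V ℝ) (t : ℝ) :
    M.charpoly.eval t = ((Matrix.diagonal (fun _ => t)) - M).det := by
  rw [Matrix.charpoly, ← Polynomial.coe_evalRingHom, RingHom.map_det]
  congr 1
  ext x y
  by_cases h : x = y
  · subst h
    simp [Matrix.charmatrix_apply_eq]
  · simp [Matrix.charmatrix_apply_ne _ _ _ h, Matrix.diagonal_apply_ne _ h]

lemma root_le_of_psd {V : Type*} [Fintype V] [DecidableEq V] (M : Matrix V V ℝ) (c : ℝ)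
    (h : ((Matrix.diagonal (fun _ => c) : Matrix V V ℝ) - M).PosSemidef)
    (t : ℝ) (ht : t ∈ M.charpoly.roots) : t ≤ c := by
  have hne := M.charpoly_monic.ne_zero
  have hroot : M.charpoly.eval t = 0 := (Polynomial.mem_roots hne).1 ht
  rw [eval_charpoly_eq_det'] at hroot
  obtain ⟨v, hv, hMv⟩ := (Matrix.exists_mulVec_eq_zero_iff).2 hroot
  have hMv' : M *ᵥ v = t • v := by
    funext x
    have := congrFun hMv x
    rw [Matrix.sub_mulVec] at this
    simp only [Pi.sub_apply, Matrix.mulVec_diagonal, Pi.zero_apply] at this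
    have h2 : t * v x - (M *ᵥ v) x = 0 := this
    simp only [Pi.smul_apply, smul_eq_mul]
    linarith
  have h2 := h.dotProduct_mulVec_nonneg v
  rw [Matrix.sub_mulVec, star_trivial] at h2
  have h3 : v ⬝ᵥ ((Matrix.diagonal fun _ => c) *ᵥ v - M *ᵥ v) = (c - t) * (v ⬝ᵥ v) := by
    rw [hMv', dotProduct_sub]
    simp only [dotProduct, Matrix.mulVec_diagonal, Pi.smul_apply, smul_eq_mul,
      Finset.mul_sum, ← Finset.sum_sub_distrib]
    apply Finset.sum_congr rfl
    intro x _
    ring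
  rw [h3] at h2
  have h0 : 0 ≤ v ⬝ᵥ v := Finset.sum_nonneg fun i _ => mul_self_nonneg _
  have h0' : v ⬝ᵥ v ≠ 0 := fun hz => hv (dotProduct_self_eq_zero.mp hz)
  nlinarith [lt_of_le_of_ne h0 (Ne.symm h0')]

lemma psd_allOnes {V : Type*} [Fintype V] [DecidableEq V] :
    (Matrix.of (fun _ _ => (1:ℝ)) : Matrix V V ℝ).PosSemidef := by
  refine .of_dotProduct_mulVec_nonneg ?_ ?_
  · ext x y; simp [Matrix.conjTranspose_apply]
  · intro v
    rw [star_trivial]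
    have : v ⬝ᵥ ((Matrix.of (fun _ _ => (1:ℝ)) : Matrix V V ℝ) *ᵥ v)
        = (∑ i : V, v i) * (∑ i : V, v i) := by
      simp [dotProduct, Matrix.mulVec, Finset.sum_mul]
    rw [this]
    exact mul_self_nonneg _

lemma psd_card_sub_lap {V : Type*} [Fintype V] [DecidableEq V] (G : SimpleGraph V)
    [DecidableRel G.Adj] :
    ((Matrix.diagonal (fun _ => (Fintype.card V : ℝ))) - G.lapMatrix ℝ).PosSemidef := by
  classical
  have key : (Matrix.diagonal (fun _ => (Fintype.card V : ℝ))) - G.lapMatrix ℝ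
      = Gᶜ.lapMatrix ℝ + Matrix.of (fun _ _ => (1:ℝ)) := by
    ext x y
    have hdc : Gᶜ.degree x = Fintype.card V - 1 - G.degree x := G.degree_compl x
    have hd1 : G.degree x ≤ Fintype.card V - 1 := by
      have := G.degree_lt_card_verts x
      omega
    have hc1 : 1 ≤ Fintype.card V := Fintype.card_pos_iff.2 ⟨x⟩
    by_cases h : x = y
    · subst h
      simp only [Matrix.sub_apply, Matrix.add_apply, Matrix.diagonal_apply_eq,
        SimpleGraph.lapMatrix, SimpleGraph.degMatrix, SimpleGraph.adjMatrix_apply,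
        Matrix.of_apply, SimpleGraph.irrefl, if_false]
      rw [hdc]
      push_cast [Nat.cast_sub hd1, Nat.cast_sub hc1]
      ring
    · simp only [Matrix.sub_apply, Matrix.add_apply, Matrix.diagonal_apply_ne _ h,
        SimpleGraph.lapMatrix, SimpleGraph.degMatrix, SimpleGraph.adjMatrix_apply,
        Matrix.of_apply, Matrix.diagonal_apply_ne _ h]
      by_cases ha : G.Adj x y
      · have : ¬ Gᶜ.Adj x y := by simp [SimpleGraph.compl_adj, ha]
        simp [ha, this]
      · have : Gᶜ.Adj x y := by simp [SimpleGraph.compl_adj, h, ha]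
        simp [ha, this]
  rw [key]
  exact (SimpleGraph.posSemidef_lapMatrix ℝ Gᶜ).add psd_allOnes

variable {α β : Type*} [Fintype α] [Fintype β] [DecidableEq α] [DecidableEq β]

/-- `M ⊗ I` -/
def liftL (M : Matrix α α ℝ) : Matrix (α × β) (α × β) ℝ :=
  Matrix.of fun x y => M x.1 y.1 * (if x.2 = y.2 then 1 else 0)

/-- `I ⊗ N` -/
def liftR (N : Matrix β β ℝ) : Matrix (α × β) (α × β) ℝ :=
  Matrix.of fun x y => (if x.1 = y.1 then 1 else 0) * N x.2 y.2

set_option linter.unusedSectionVars false in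
lemma psd_liftL {M : Matrix α α ℝ} (hM : M.PosSemidef) : (liftL (β := β) M).PosSemidef := by
  refine .of_dotProduct_mulVec_nonneg ?_ ?_
  · ext x y
    have := congrFun (congrFun hM.1 x.1) y.1
    simp only [Matrix.conjTranspose_apply, star_trivial] at this ⊢
    simp only [liftL, Matrix.of_apply, this, eq_comm]
  · intro v
    rw [star_trivial]
    have key : v ⬝ᵥ (liftL (β := β) M *ᵥ v)
        = ∑ b : β, (fun a => v (a, b)) ⬝ᵥ (M *ᵥ fun a => v (a, b)) := by
      simp only [dotProduct, Matrix.mulVec, liftL, Matrix.of_apply, Fintype.sum_prod_type,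
        mul_ite, mul_one, mul_zero]
      rw [Finset.sum_comm]
      apply Finset.sum_congr rfl
      intro b _
      apply Finset.sum_congr rfl
      intro a _
      congr 1
      rw [Finset.sum_comm]
      simp [Finset.sum_ite_eq, dotProduct]
    rw [key]
    exact Finset.sum_nonneg fun b _ => by simpa using hM.dotProduct_mulVec_nonneg fun a => v (a, b)

set_option linter.unusedSectionVars false in
lemma psd_liftR {N : Matrix β β ℝ} (hN : N.PosSemidef) : (liftR (α := α) N).PosSemidef := by
  refine .of_dotProduct_mulVec_nonneg ?_ ?_
  · ext x y
    have := congrFun (congrFun hN.1 x.2) y.2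
    simp only [Matrix.conjTranspose_apply, star_trivial] at this ⊢
    simp only [liftR, Matrix.of_apply, this, eq_comm]
  · intro v
    rw [star_trivial]
    have key : v ⬝ᵥ (liftR (α := α) N *ᵥ v)
        = ∑ a : α, (fun b => v (a, b)) ⬝ᵥ (N *ᵥ fun b => v (a, b)) := by
      simp only [dotProduct, Matrix.mulVec, liftR, Matrix.of_apply, Fintype.sum_prod_type,
        ite_mul, one_mul, zero_mul]
      apply Finset.sum_congr rfl
      intro a _
      apply Finset.sum_congr rfl
      intro b _
      congr 1
      simp [Finset.sum_ite_eq, dotProduct]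
    rw [key]
    exact Finset.sum_nonneg fun a _ => by simpa using hN.dotProduct_mulVec_nonneg fun b => v (a, b)

lemma degree_instIrrel {V : Type*} (G : SimpleGraph V) (v : V)
    (i1 i2 : Fintype (G.neighborSet v)) :
    @SimpleGraph.degree V G v i1 = @SimpleGraph.degree V G v i2 := by
  rw [Subsingleton.elim i1 i2]

set_option maxHeartbeats 1000000 in
lemma lap_boxProd_decomp (F : SimpleGraph α) (H : SimpleGraph β)
    [DecidableRel F.Adj] [DecidableRel H.Adj] [DecidableRel (F □ H).Adj] :
    (Matrix.diagonal (fun _ : α × β => ((Fintype.card α : ℝ) + (Fintype.card β : ℝ))))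
        - (F □ H).lapMatrix ℝ
      = liftL ((Matrix.diagonal (fun _ => (Fintype.card α : ℝ))) - F.lapMatrix ℝ)
        + liftR ((Matrix.diagonal (fun _ => (Fintype.card β : ℝ))) - H.lapMatrix ℝ) := by
  ext ⟨a, b⟩ ⟨c, d⟩
  simp only [Matrix.sub_apply, Matrix.add_apply, liftL, liftR, Matrix.of_apply,
    SimpleGraph.lapMatrix, SimpleGraph.degMatrix, SimpleGraph.adjMatrix_apply]
  by_cases h1 : a = c <;> by_cases h2 : b = d
  · subst h1; subst h2
    have hdeg := SimpleGraph.degree_boxProd (G := F) (H := H) (a, b)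
    simp only [Matrix.diagonal_apply_eq, SimpleGraph.boxProd_adj]
    rw [degree_instIrrel (F □ H) (a, b) _ (SimpleGraph.boxProdFintypeNeighborSet (a, b)), hdeg]
    push_cast
    simp
    ring
  · subst h1
    have hne : (a, b) ≠ (a, d) := by simp [h2]
    simp only [Matrix.diagonal_apply_ne _ hne, Matrix.diagonal_apply_ne _ h2,
      Matrix.diagonal_apply_eq, if_neg h2, SimpleGraph.boxProd_adj]
    simp [h2, SimpleGraph.irrefl]
  · subst h2
    have hne : (a, b) ≠ (c, b) := by simp [h1]
    simp only [Matrix.diagonal_apply_ne _ hne, Matrix.diagonal_apply_ne _ h1,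
      Matrix.diagonal_apply_eq, if_neg h1, SimpleGraph.boxProd_adj]
    simp [h1, SimpleGraph.irrefl]
  · have hne : (a, b) ≠ (c, d) := by simp [h1]
    simp only [Matrix.diagonal_apply_ne _ hne, Matrix.diagonal_apply_ne _ h1,
      Matrix.diagonal_apply_ne _ h2, if_neg h1, if_neg h2, SimpleGraph.boxProd_adj]
    simp [h1, h2]

lemma charpoly_lap_iso {V W : Type*} [Fintype V] [DecidableEq V] [Fintype W] [DecidableEq W]
    (G : SimpleGraph V) (G' : SimpleGraph W) [DecidableRel G.Adj] [DecidableRel G'.Adj]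
    (e : G ≃g G') : (G.lapMatrix ℝ).charpoly = (G'.lapMatrix ℝ).charpoly := by
  have hdeg : ∀ x, G.degree x = G'.degree (e x) := by
    intro x
    rw [← SimpleGraph.card_neighborSet_eq_degree, ← SimpleGraph.card_neighborSet_eq_degree]
    exact Fintype.card_congr (e.mapNeighborSet x)
  have hM : G.lapMatrix ℝ = Matrix.reindex e.toEquiv.symm e.toEquiv.symm (G'.lapMatrix ℝ) := by
    ext x y
    simp only [Matrix.reindex_apply, Matrix.submatrix_apply, Equiv.symm_symm]
    simp only [SimpleGraph.lapMatrix, SimpleGraph.degMatrix, Matrix.sub_apply,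
      SimpleGraph.adjMatrix_apply]
    by_cases h : x = y
    · subst h
      have hd : G.degree x = G'.degree (e.toEquiv x) := hdeg x
      rw [Matrix.diagonal_apply_eq, Matrix.diagonal_apply_eq, hd]
      simp
    · have h' : e.toEquiv x ≠ e.toEquiv y := fun hc => h (e.toEquiv.injective hc)
      rw [Matrix.diagonal_apply_ne _ h, Matrix.diagonal_apply_ne _ h']
      simp [e.map_adj_iff]
  rw [hM, Matrix.charpoly_reindex]

end AuxLemmas

/-- For `n ≥ 9`, a connected graph of order `n` realizing `S_{{i,j},n}^m` is not the Cartesian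
product of two graphs, each having at least two vertices. -/
theorem not_cartesian_product {V : Type*} [Fintype V] [DecidableEq V] (G : SimpleGraph V)
    (n i j m : ℕ) (hn : 9 ≤ n) (hcard : Fintype.card V = n) (hG : G.Connected)
    (hi : 0 < i) (hij : i < j) (hj : j ≤ n) (hm1 : 1 ≤ m) (hmn : m ≤ n)
    (hmi : m ≠ i) (hmj : m ≠ j)
    (hspec : lapSpec G = Sdouble i j n m) :
    ¬ ∃ (p q : ℕ) (F : SimpleGraph (Fin p)) (H : SimpleGraph (Fin q)),
        2 ≤ p ∧ 2 ≤ q ∧ Nonempty (G ≃g F.boxProd H) := by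
  rintro ⟨p, q, F, H, hp, hq, ⟨e⟩⟩
  letI : DecidableRel G.Adj := Classical.decRel _
  letI : DecidableRel F.Adj := Classical.decRel _
  letI : DecidableRel H.Adj := Classical.decRel _
  letI : DecidableRel (F □ H).Adj := Classical.decRel _
  -- order of the product
  have hpq : p * q = n := by
    have h1 := Fintype.card_congr e.toEquiv
    simp only [hcard, Fintype.card_prod, Fintype.card_fin] at h1
    omega
  -- pick a large eigenvalue `k` that survives the erasures
  obtain ⟨k, hk1, hk2, hki, hkj⟩ : ∃ k, n ≤ k + 2 ∧ k ≤ n ∧ k ≠ i ∧ k ≠ j := by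
    by_cases hjn : j = n
    · by_cases hin : i = n - 1
      · exact ⟨n - 2, by omega, by omega, by omega, by omega⟩
      · exact ⟨n - 1, by omega, by omega, by omega, by omega⟩
    · exact ⟨n, by omega, by omega, by omega, by omega⟩
  have hmem : (k : ℝ) ∈ lapSpec G := by
    rw [hspec]
    unfold Sdouble
    refine Multiset.mem_map.2 ⟨k, ?_, rfl⟩
    refine Multiset.mem_cons_of_mem ?_
    rw [Multiset.mem_erase_of_ne hkj, Multiset.mem_erase_of_ne hki, ← Finset.mem_def,
      Finset.mem_range]
    omega
  -- transport to the box product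
  have hls : lapSpec G = ((G.lapMatrix ℝ).charpoly).roots := rfl
  have hcp : (G.lapMatrix ℝ).charpoly = ((F □ H).lapMatrix ℝ).charpoly :=
    charpoly_lap_iso G (F □ H) e
  have hmem' : (k : ℝ) ∈ (((F □ H).lapMatrix ℝ).charpoly).roots := by
    rw [← hcp, ← hls]; exact hmem
  -- the PSD bound on the box product spectrum
  have hpsd : ((Matrix.diagonal (fun _ : Fin p × Fin q => ((p : ℝ) + (q : ℝ))))
      - (F □ H).lapMatrix ℝ).PosSemidef := by
    have h1 := psd_liftL (β := Fin q) (psd_card_sub_lap F)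
    have h2 := psd_liftR (α := Fin p) (psd_card_sub_lap H)
    have h3 := h1.add h2
    rw [← lap_boxProd_decomp F H] at h3
    simpa [Fintype.card_fin] using h3
  have hle : (k : ℝ) ≤ (p : ℝ) + (q : ℝ) := root_le_of_psd _ _ hpsd _ hmem'
  -- final arithmetic contradiction
  have hkR : (n : ℝ) ≤ (k : ℝ) + 2 := by exact_mod_cast hk1
  have hpqR : (p : ℝ) * (q : ℝ) = (n : ℝ) := by exact_mod_cast hpq
  have hpR : (2 : ℝ) ≤ (p : ℝ) := by exact_mod_cast hp
  have hqR : (2 : ℝ) ≤ (q : ℝ) := by exact_mod_cast hq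
  have hnR : (9 : ℝ) ≤ (n : ℝ) := by exact_mod_cast hn
  nlinarith [mul_nonneg (sub_nonneg.2 hpR) (sub_nonneg.2 hqR)]
end
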